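/- arXiv:2309.11624 — 4 statements merged into one kernel-verified Lean document; each statement's English description precedes it below -/
import Mathlib

section
/- Let A = kQ/I be a special multiserial algebra and N a weakly connected component of G_{Q,I} with associated repetition-free path ω(N). Define on the arrows of Q_N the relation α ≤_f β iff ω(N) = u α u' for some paths u, u' with β a subpath of α u'. Then ≤_f is a total order on the arrow set of Q_N. -/
namespace UMPPaper

variable {V A : Type}

/-- A (non-trivial) path in the quiver with source/target maps `s`, `t`,
represented as a nonempty list of composable arrows. -/
def IsPath (s t : A → V) (p : List A) : Prop :=
  p ≠ [] ∧ p.Chain' (fun a b => t a = s b)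

/-- `Q` is a cyclic quiver: there is a repetition-free path through all arrows
(and all vertices) whose target equals its source. -/
def IsCyclicQuiver (s t : A → V) : Prop :=
  ∃ p : List A, IsPath s t p ∧ p.Nodup ∧ (∀ a : A, a ∈ p) ∧
    (∀ v : V, ∃ a ∈ p, s a = v ∨ t a = v) ∧
    (∃ x ∈ p.getLast?, ∃ y ∈ p.head?, t x = s y)

/-- `Φ_a`: paths containing the arrow `a` as a subpath, all of whose
intermediate vertices have exactly one incoming and exactly one outgoing arrow. -/
def Phi (s t : A → V) (a : A) : Set (List A) :=
  {p | IsPath s t p ∧ [a] <:+: p ∧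
    ∀ x ∈ p.dropLast, (∃! b : A, s b = t x) ∧ (∃! b : A, t b = t x)}

/-- Specification of the assignment `a ↦ ω_a`. -/
def OmegaSpec (s t : A → V) (ω : A → List A) : Prop :=
  (IsCyclicQuiver s t → ∃ p : List A, IsPath s t p ∧ p.Nodup ∧ (∀ a : A, a ∈ p) ∧
      (∃ x ∈ p.getLast?, ∃ y ∈ p.head?, t x = s y) ∧ ∀ a : A, ω a = p) ∧
  (¬ IsCyclicQuiver s t →
    ∀ a : A, ω a ∈ Phi s t a ∧ ∀ q ∈ Phi s t a, q.length ≤ (ω a).length)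

/-- The quiver is connected (as an undirected graph on vertices). -/
def QConnected (s t : A → V) : Prop :=
  ∀ u v : V, Relation.ReflTransGen
    (fun x y => ∃ a : A, (s a = x ∧ t a = y) ∨ (s a = y ∧ t a = x)) u v

/-! ## Bound quiver algebras: the ideal `I` is abstracted by the set `Zi` of paths lying in it. -/

/-- The set of paths lying in a (two-sided) ideal is closed under taking super-paths. -/
def ZeroClosed (Zi : List A → Prop) : Prop :=
  ∀ p q : List A, Zi p → p <:+: q → Zi q

/-- Path-level content of admissibility: `I ⊆ R², Rᵐ ⊆ I` for some `m ≥ 2`. -/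
def Admissible (s t : A → V) (Zi : List A → Prop) : Prop :=
  (∀ p : List A, Zi p → 2 ≤ p.length) ∧
  ∃ m : ℕ, 2 ≤ m ∧ ∀ p : List A, IsPath s t p → m ≤ p.length → Zi p

/-- `t(p) = s(q)` and the junction (last arrow of `p`)·(first arrow of `q`) is not in `I`. -/
def JunctionOK (s t : A → V) (Zi : List A → Prop) (p q : List A) : Prop :=
  ∃ x ∈ p.getLast?, ∃ y ∈ q.head?, t x = s y ∧ ¬ Zi [x, y]

/-- Directed edge of the ramifications graph, on path-vertices. -/
def REdgeP (s t : A → V) (Zi : List A → Prop) (p q : List A) : Prop :=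
  p ≠ q ∧ JunctionOK s t Zi p q

/-- Directed edge `ω_a → ω_b` of the ramifications graph `G_{Q,I}`. -/
def REdge (s t : A → V) (Zi : List A → Prop) (ω : A → List A) (a b : A) : Prop :=
  REdgeP s t Zi (ω a) (ω b)

/-- Undirected adjacency (including equality of vertices) used for weak connectivity. -/
def RAdj (s t : A → V) (Zi : List A → Prop) (ω : A → List A) (a b : A) : Prop :=
  ω a = ω b ∨ REdge s t Zi ω a b ∨ REdge s t Zi ω b a

/-- `a` and `b` lie in the same weakly connected component of `G_{Q,I}`. -/
def SameComp (s t : A → V) (Zi : List A → Prop) (ω : A → List A) (a b : A) : Prop :=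
  Relation.ReflTransGen (RAdj s t Zi ω) a b

/-- `N` (a set of arrows) is (the arrow set `(Q_N)₁` of) a weakly connected
component of the ramifications graph `G_{Q,I}`. -/
def IsComp (s t : A → V) (Zi : List A → Prop) (ω : A → List A) (N : Set A) : Prop :=
  ∃ a : A, N = {b | SameComp s t Zi ω a b}

/-- A path of the subquiver `Q_N`. -/
def PathIn (s t : A → V) (N : Set A) (p : List A) : Prop :=
  IsPath s t p ∧ ∀ x ∈ p, x ∈ N

/-- `m` is (a representative of) a maximal path of `A_N = kQ_N/I_N`
(for `N = Set.univ` this is a maximal path of `A = kQ/I`). -/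
def MaxPathIn (s t : A → V) (Zi : List A → Prop) (N : Set A) (m : List A) : Prop :=
  PathIn s t N m ∧ ¬ Zi m ∧
  (∀ α ∈ N, (∃ x ∈ m.getLast?, t x = s α) → Zi (m ++ [α])) ∧
  (∀ α ∈ N, (∃ x ∈ m.head?, t α = s x) → Zi (α :: m))

/-- `A_N` is a UMP algebra: any two non-disjoint maximal paths coincide. -/
def UMPin (s t : A → V) (Zi : List A → Prop) (N : Set A) : Prop :=
  ∀ m m' : List A, MaxPathIn s t Zi N m → MaxPathIn s t Zi N m' →
    (∃ a, a ∈ m ∧ a ∈ m') → m = m'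

/-- `A = kQ/I` is special multiserial: every arrow has at most one right and at
most one left arrow-extension outside `I`. -/
def SpecialMultiserial (s t : A → V) (Zi : List A → Prop) : Prop :=
  ∀ α β γ : A,
    ((t α = s β ∧ ¬ Zi [α, β]) → (t α = s γ ∧ ¬ Zi [α, γ]) → β = γ) ∧
    ((t β = s α ∧ ¬ Zi [β, α]) → (t γ = s α ∧ ¬ Zi [γ, α]) → β = γ)

/-- `ws = [ω_0, …, ω_n]` is the enumeration of the vertices of the component `N`
in edge order; `ω(N) = ws.flatten`. -/
def CompEnum (s t : A → V) (Zi : List A → Prop) (ω : A → List A)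
    (N : Set A) (ws : List (List A)) : Prop :=
  ws ≠ [] ∧ ws.Nodup ∧ (∀ p, p ∈ ws ↔ ∃ a ∈ N, ω a = p) ∧
  ws.Chain' (fun p q => JunctionOK s t Zi p q) ∧ IsPath s t ws.flatten

/-- `W^{(l)}`, the `l`-fold concatenation of `W`. -/
def cyclePow (W : List A) (l : ℕ) : List A := (List.replicate l W).flatten

/-- `R` is a minimal set of zero relations generating `I_N` (so `A_N` is monomial). -/
def MinGen (s t : A → V) (Zi : List A → Prop) (N : Set A) (R : Set (List A)) : Prop :=
  (∀ r ∈ R, PathIn s t N r ∧ Zi r) ∧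
  (∀ p, PathIn s t N p → (Zi p ↔ ∃ r ∈ R, r <:+: p)) ∧
  (∀ r ∈ R, ∀ r' ∈ R, r <:+: r' → r = r')

/-- `r` is a quadratic junction relation `ω_a^{l_a} ω_b^0` with `a, b ∈ (Q_N)₁`. -/
def IsJuncRel (ω : A → List A) (N : Set A) (r : List A) : Prop :=
  ∃ a ∈ N, ∃ b ∈ N, ∃ x ∈ (ω a).getLast?, ∃ y ∈ (ω b).head?, r = [x, y]

/-- `S_N = R_N \ Ω_N`. -/
def SRel (ω : A → List A) (N : Set A) (R : Set (List A)) : Set (List A) :=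
  {r ∈ R | ¬ IsJuncRel ω N r}

/-- The order `≤_f` on arrows given by position along `W = ω(N)`. -/
def leF (W : List A) (α β : A) : Prop :=
  ∃ u u' : List A, W = u ++ α :: u' ∧ β ∈ α :: u'

/-- The order `≤_s` on relations: comparison of first arrows. -/
def leS (W : List A) (u v : List A) : Prop :=
  ∃ x ∈ u.head?, ∃ y ∈ v.head?, leF W x y

/-- `ss = [s_1, …, s_k]` enumerates `S` in strictly increasing `≤_s` order. -/
def SEnum (W : List A) (S : Set (List A)) (ss : List (List A)) : Prop :=
  ss.Nodup ∧ (∀ r, r ∈ ss ↔ r ∈ S) ∧ ss.Chain' (fun u v => leS W u v ∧ u ≠ v)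

/-- `m` is one of the paths `m_i`, `0 ≤ i ≤ k`, of the definition of `S_N^*`.
Note that `ω_n^{l_n} ω_0^0 ∈ I_N` is expressed by `¬ JunctionOK s t Zi W W`. -/
def IsMi (s t : A → V) (Zi : List A → Prop) (W : List A)
    (ss : List (List A)) (m : List A) : Prop :=
  -- case `0 < i < k`
  (∃ p ∈ ss.zip ss.tail, ∃ u v v' : List A, ∃ x ∈ p.1.head?, ∃ y ∈ p.2.head?,
      W = u ++ [x] ++ v ++ [y] ++ v' ∧ m = v ++ p.2.dropLast) ∨
  -- case `i = 0`, `ω_n^{l_n} ω_0^0 ∈ I_N`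
  (¬ JunctionOK s t Zi W W ∧
    ∃ s1 ∈ ss.head?, ∃ u z : List A, W = u ++ s1 ++ z ∧ m = u ++ s1.dropLast) ∨
  -- case `i = k`, `ω_n^{l_n} ω_0^0 ∈ I_N`
  (¬ JunctionOK s t Zi W W ∧
    ∃ sk ∈ ss.getLast?, ∃ v z : List A, W = z ++ sk ++ v ∧ m = sk.tail ++ v) ∨
  -- case `i ∈ {0, k}`, `ω_n^{l_n} ω_0^0 ∉ I_N`
  (JunctionOK s t Zi W W ∧
    ∃ s1 ∈ ss.head?, ∃ sk ∈ ss.getLast?, ∃ u v z z' : List A,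
      ∃ x ∈ s1.head?, ∃ y ∈ sk.head?,
      W = u ++ [x] ++ z ∧ W = z' ++ [y] ++ v ∧ m = v ++ u ++ s1.dropLast)

/-- `r` is an `ω`-relation: a zero relation of length greater than two which is the
unique element of `I` dividing it. -/
def IsOmegaRel (s t : A → V) (Zi : List A → Prop) (r : List A) : Prop :=
  IsPath s t r ∧ Zi r ∧ 3 ≤ r.length ∧ ∀ r' : List A, Zi r' → r' <:+: r → r' = r

lemma singleton_infix {a : A} {l : List A} : [a] <:+: l ↔ a ∈ l := by
  constructor
  · intro h; exact h.mem (List.mem_singleton_self a)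
  · intro h; obtain ⟨u, v, rfl⟩ := List.append_of_mem h; exact ⟨u, v, by simp⟩

lemma mem_dropLast_of_decomp {l u v : List A} {x y : A} (h : l = u ++ x :: y :: v) :
    x ∈ l.dropLast := by
  subst h
  rw [List.dropLast_append_of_ne_nil (by simp)]
  simp

lemma mem_dropLast_of_prefix {l u v : List A} (h : l = u ++ v) (hv : v ≠ []) {x : A}
    (hx : x ∈ u) : x ∈ l.dropLast := by
  subst h
  rw [List.dropLast_append_of_ne_nil hv]
  exact List.mem_append_left _ hx

lemma fwd (s t : A → V) (p q : List A)
    (hp : p.Chain' (fun a b => t a = s b)) (hq : q.Chain' (fun a b => t a = s b))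
    (hint : ∀ x ∈ p.dropLast, ∃! b : A, s b = t x) :
    ∀ u' u (c : A) v v', p = u ++ c :: u' → q = v ++ c :: v' → u' <+: v' ∨ v' <+: u' := by
  intro u'
  induction u' with
  | nil => intro _ _ _ _ _ _; exact Or.inl (List.nil_prefix)
  | cons e u'' ih =>
    intro u c v v' hpe hqe
    cases v' with
    | nil => exact Or.inr (List.nil_prefix)
    | cons f v'' =>
      have hce : t c = s e := by
        have := (List.isChain_append.mp (hpe ▸ hp)).2.1
        exact (List.isChain_cons_cons.mp this).1
      have hcf : t c = s f := by
        have := (List.isChain_append.mp (hqe ▸ hq)).2.1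
        exact (List.isChain_cons_cons.mp this).1
      obtain ⟨b, -, hb⟩ := hint c (mem_dropLast_of_decomp hpe)
      have hef : e = f := (hb e hce.symm).trans (hb f hcf.symm).symm
      subst hef
      rcases ih (u ++ [c]) e (v ++ [c]) v'' (by simp [hpe]) (by simp [hqe]) with h | h
      · exact Or.inl (List.cons_prefix_cons.mpr ⟨rfl, h⟩)
      · exact Or.inr (List.cons_prefix_cons.mpr ⟨rfl, h⟩)

lemma bwd (s t : A → V) (p q : List A)
    (hp : p.Chain' (fun a b => t a = s b)) (hq : q.Chain' (fun a b => t a = s b))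
    (hint : ∀ x ∈ p.dropLast, ∃! b : A, t b = t x) :
    ∀ u (c : A) u' v v', p = u ++ c :: u' → q = v ++ c :: v' → u <:+ v ∨ v <:+ u := by
  intro u
  induction u using List.reverseRecOn with
  | nil => intro _ _ _ _ _ _; exact Or.inl (List.nil_suffix)
  | append_singleton u₀ d ih =>
    intro c u' v v' hpe hqe
    rcases v.eq_nil_or_concat with rfl | ⟨v₀, d', rfl⟩
    · exact Or.inr (List.nil_suffix)
    · have hdc : t d = s c := by
        have := (List.isChain_append.mp (hpe ▸ hp)).2.2
        exact this d (by simp) c rfl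
      have hdc' : t d' = s c := by
        have h2 : q = v₀ ++ [d'] ++ c :: v' := by simpa using hqe
        have := (List.isChain_append.mp (h2 ▸ hq)).2.2
        exact this d' (by simp) c rfl
      have hdm : d ∈ p.dropLast := mem_dropLast_of_decomp (by simpa using hpe)
      obtain ⟨b, -, hb⟩ := hint d hdm
      have hdd : d = d' := (hb d rfl).trans (hb d' (hdc'.trans hdc.symm)).symm
      subst hdd
      rcases ih d (c :: u') v₀ (c :: v') (by simpa using hpe) (by simpa using hqe) with h | h
      · obtain ⟨w, hw⟩ := h; exact Or.inl ⟨w, by simp [← hw]⟩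
      · obtain ⟨w, hw⟩ := h; exact Or.inr ⟨w, by simp [← hw]⟩

lemma ext_right {s : A → V} {t : A → V} {a c d : A} {p q u u' v w : List A}
    (hp : p ∈ Phi s t a) (hq : q ∈ Phi s t c)
    (hpe : p = u ++ d :: u') (hqe : q = v ++ d :: (u' ++ w)) (hw : w ≠ []) :
    p ++ w ∈ Phi s t a := by
  obtain ⟨⟨hpne, hpch⟩, hpa, hpint⟩ := hp
  obtain ⟨⟨hqne, hqch⟩, hqc, hqint⟩ := hq
  have hq2 : q = (v ++ d :: u') ++ w := by simp [hqe]
  have hqsplit := List.isChain_append.mp (hq2 ▸ hqch)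
  refine ⟨⟨by simp [hpe], ?_⟩, ?_, ?_⟩
  · apply List.isChain_append.mpr
    refine ⟨hpch, hqsplit.2.1, ?_⟩
    intro x hx y hy
    refine hqsplit.2.2 x ?_ y hy
    rw [hpe] at hx
    rw [List.getLast?_append_of_ne_nil _ (by simp)] at hx ⊢
    exact hx
  · rw [singleton_infix] at hpa ⊢
    exact List.mem_append_left _ hpa
  · intro x hx
    rw [List.dropLast_append_of_ne_nil hw] at hx
    rcases List.mem_append.mp hx with hx | hx
    · rw [hpe] at hx
      rcases List.mem_append.mp hx with hx | hx
      · exact hpint x (mem_dropLast_of_prefix hpe (by simp) hx)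
      · exact hqint x (mem_dropLast_of_prefix hq2 hw (List.mem_append_right _ hx))
    · exact hqint x (by
        rw [hq2, List.dropLast_append_of_ne_nil hw]
        exact List.mem_append_right _ hx)

lemma ext_left {s : A → V} {t : A → V} {a c d : A} {p q u' v v' w : List A}
    (hp : p ∈ Phi s t a) (hq : q ∈ Phi s t c)
    (hpe : p = (w ++ v) ++ d :: u') (hqe : q = v ++ d :: v') (hw : w ≠ []) :
    w ++ q ∈ Phi s t c := by
  obtain ⟨⟨hpne, hpch⟩, hpa, hpint⟩ := hp
  obtain ⟨⟨hqne, hqch⟩, hqc, hqint⟩ := hq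
  have hp2 : p = w ++ (v ++ d :: u') := by simp [hpe]
  have hpsplit := List.isChain_append.mp (hp2 ▸ hpch)
  refine ⟨⟨by simp [hqne], ?_⟩, ?_, ?_⟩
  · apply List.isChain_append.mpr
    refine ⟨hpsplit.1, hqch, ?_⟩
    intro x hx y hy
    refine hpsplit.2.2 x hx y ?_
    rw [hqe] at hy
    rcases v with _ | ⟨e, v₀⟩ <;> simpa using hy
  · rw [singleton_infix] at hqc ⊢
    exact List.mem_append_right _ hqc
  · intro x hx
    rw [List.dropLast_append_of_ne_nil hqne] at hx
    rcases List.mem_append.mp hx with hx | hx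
    · exact hpint x (mem_dropLast_of_prefix hp2 (by simp) hx)
    · exact hqint x hx

lemma exists_dup_decomp {l : List A} (h : ¬ l.Nodup) :
    ∃ (x : A) (u v v' : List A), l = u ++ x :: (v ++ x :: v') := by
  induction l with
  | nil => simp at h
  | cons a l ih =>
    rw [List.nodup_cons] at h
    by_cases ha : a ∈ l
    · obtain ⟨v, v', rfl⟩ := List.append_of_mem ha
      exact ⟨a, [], v, v', rfl⟩
    · obtain ⟨x, u, v, v', rfl⟩ := ih (fun hn => h ⟨ha, hn⟩)
      exact ⟨x, a :: u, v, v', rfl⟩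

lemma phi_max_nodup {s : A → V} {t : A → V} {a : A} {p : List A}
    (hp : p ∈ Phi s t a) (hmax : ∀ q ∈ Phi s t a, q.length ≤ p.length) :
    p.Nodup := by
  by_contra hnd
  obtain ⟨x, u, v, v', hdec⟩ := exists_dup_decomp hnd
  obtain ⟨⟨hpne, hpch⟩, hpa, hpint⟩ := hp
  set c : List A := x :: v with hc
  set c' : List A := x :: v' with hc'
  have hp3 : p = u ++ (c ++ c') := by simp [hdec, hc, hc']
  have split1 := List.isChain_append.mp (hp3 ▸ hpch)
  have split2 := List.isChain_append.mp split1.2.1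
  have hp' : u ++ (c ++ (c ++ c')) ∈ Phi s t a := by
    refine ⟨⟨by simp [hc], ?_⟩, ?_, ?_⟩
    · refine List.isChain_append.mpr ⟨split1.1, List.isChain_append.mpr
        ⟨split2.1, split1.2.1, ?_⟩, ?_⟩
      · intro z hz y hy
        refine split2.2.2 z hz y ?_
        simp only [hc, hc'] at hy ⊢
        simpa using hy
      · intro z hz y hy
        refine split1.2.2 z hz y ?_
        simp only [hc, hc'] at hy ⊢
        simpa using hy
    · rw [singleton_infix] at hpa ⊢
      rw [hp3] at hpa
      simp only [List.mem_append] at hpa ⊢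
      tauto
    · intro z hz
      apply hpint
      have h1 : (u ++ (c ++ (c ++ c'))).dropLast = (u ++ c ++ c) ++ c'.dropLast := by
        rw [show u ++ (c ++ (c ++ c')) = (u ++ c ++ c) ++ c' by simp,
          List.dropLast_append_of_ne_nil (by simp [hc'])]
      have h2 : p.dropLast = (u ++ c) ++ c'.dropLast := by
        rw [show p = (u ++ c) ++ c' by simp [hp3],
          List.dropLast_append_of_ne_nil (by simp [hc'])]
      rw [h1] at hz
      rw [h2]
      simp only [List.mem_append] at hz ⊢
      tauto
  have hlen := hmax _ hp'
  simp [hp3, hc] at hlen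

lemma phi_max_unique {s : A → V} {t : A → V} {a c : A} {p q : List A}
    (hp : p ∈ Phi s t a) (hpmax : ∀ r ∈ Phi s t a, r.length ≤ p.length)
    (hq : q ∈ Phi s t c) (hqmax : ∀ r ∈ Phi s t c, r.length ≤ q.length)
    (hc : c ∈ p) : p = q := by
  obtain ⟨u, u', hpe⟩ := List.append_of_mem hc
  obtain ⟨v, v', hqe⟩ := List.append_of_mem (singleton_infix.mp hq.2.1)
  have hpch := hp.1.2
  have hqch := hq.1.2
  have hfwd := fwd s t p q hpch hqch (fun x hx => (hp.2.2 x hx).1) u' u c v v' hpe hqe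
  have hbwd := bwd s t p q hpch hqch (fun x hx => (hp.2.2 x hx).2) u c u' v v' hpe hqe
  have huv : u = v := by
    rcases hbwd with ⟨w, hw⟩ | ⟨w, hw⟩
    · rcases eq_or_ne w [] with rfl | hwne
      · simpa using hw
      · exfalso
        have hext := ext_left (w := w) hq hp (by rw [hqe, ← hw]) hpe hwne
        have hlen := hpmax _ hext
        simp only [List.length_append] at hlen
        exact hwne (List.length_eq_zero_iff.mp (by omega))
    · rcases eq_or_ne w [] with rfl | hwne
      · simpa using hw.symm
      · exfalso
        have hext := ext_left (w := w) hp hq (by rw [hpe, ← hw]) hqe hwne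
        have hlen := hqmax _ hext
        simp only [List.length_append] at hlen
        exact hwne (List.length_eq_zero_iff.mp (by omega))
  have huv' : u' = v' := by
    rcases hfwd with ⟨w, hw⟩ | ⟨w, hw⟩
    · rcases eq_or_ne w [] with rfl | hwne
      · simpa using hw
      · exfalso
        have hext := ext_right (w := w) hp hq hpe (by rw [hqe, ← hw]) hwne
        have hlen := hpmax _ hext
        simp only [List.length_append] at hlen
        exact hwne (List.length_eq_zero_iff.mp (by omega))
    · rcases eq_or_ne w [] with rfl | hwne
      · simpa using hw.symm
      · exfalso
        have hext := ext_right (w := w) hq hp hqe (by rw [hpe, ← hw]) hwne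
        have hlen := hqmax _ hext
        simp only [List.length_append] at hlen
        exact hwne (List.length_eq_zero_iff.mp (by omega))
  rw [hpe, hqe, huv, huv']

lemma leF_iff [DecidableEq A] {W : List A} (hW : W.Nodup) {x y : A} :
    leF W x y ↔ x ∈ W ∧ y ∈ W ∧ W.idxOf x ≤ W.idxOf y := by
  constructor
  · rintro ⟨u, u', hWe, hy⟩
    subst hWe
    have hdisj := List.disjoint_of_nodup_append hW
    have hxu : x ∉ u := fun hm => hdisj hm (List.mem_cons_self)
    have hyu : y ∉ u := fun hm => hdisj hm hy
    refine ⟨by simp, List.mem_append_right _ hy, ?_⟩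
    rw [List.idxOf_append_of_notMem hxu, List.idxOf_append_of_notMem hyu,
      List.idxOf_cons_self]
    omega
  · rintro ⟨hx, hy, hle⟩
    obtain ⟨u, u', hWe⟩ := List.append_of_mem hx
    subst hWe
    refine ⟨u, u', rfl, ?_⟩
    have hdisj := List.disjoint_of_nodup_append hW
    have hxu : x ∉ u := fun hm => hdisj hm (List.mem_cons_self)
    by_contra hy'
    have hyu : y ∈ u := by
      rcases List.mem_append.mp hy with h | h
      · exact h
      · exact absurd h hy'
    rw [List.idxOf_append_of_notMem hxu, List.idxOf_cons_self,
      List.idxOf_append_of_mem hyu] at hle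
    have := List.idxOf_lt_length_iff.mpr hyu
    omega

/-- for a special multiserial algebra and a component `N`, the relation
`≤_f` (position along the repetition-free path `ω(N)`) is a total order on the arrows
of `Q_N`. -/
theorem stmt_11 [Fintype V] [Fintype A] (s t : A → V) (Zi : List A → Prop)
    (ω : A → List A) (hω : OmegaSpec s t ω)
    (hZ : ZeroClosed Zi) (hadm : Admissible s t Zi)
    (hsm : SpecialMultiserial s t Zi)
    (N : Set A) (hN : IsComp s t Zi ω N)
    (ws : List (List A)) (hws : CompEnum s t Zi ω N ws) :
    (∀ a ∈ N, leF ws.flatten a a) ∧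
    (∀ a ∈ N, ∀ b ∈ N, leF ws.flatten a b → leF ws.flatten b a → a = b) ∧
    (∀ a ∈ N, ∀ b ∈ N, ∀ c ∈ N,
      leF ws.flatten a b → leF ws.flatten b c → leF ws.flatten a c) ∧
    (∀ a ∈ N, ∀ b ∈ N, leF ws.flatten a b ∨ leF ws.flatten b a) := by
  classical
  obtain ⟨hwsne, hwsnd, hwsmem, -, -⟩ := hws
  have key : ws.flatten.Nodup ∧ ∀ a ∈ N, a ∈ ws.flatten := by
    by_cases hcyc : IsCyclicQuiver s t
    · obtain ⟨p, hpath, hnd, hall, hcycle, hωp⟩ := hω.1 hcyc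
      have hmem : ∀ q ∈ ws, q = p := fun q hq => by
        obtain ⟨b, -, hb⟩ := (hwsmem q).1 hq
        rw [← hb, hωp b]
      have hwseq : ws = [p] := by
        rcases ws with _ | ⟨q, ws'⟩
        · exact absurd rfl hwsne
        · have hq := hmem q (by simp)
          subst hq
          rcases ws' with _ | ⟨r, ws''⟩
          · rfl
          · exfalso
            have hr := hmem r (by simp)
            rw [List.nodup_cons] at hwsnd
            exact hwsnd.1 (hr ▸ List.mem_cons_self)
      constructor
      · rw [hwseq]; simpa using hnd
      · intro a _; rw [hwseq]; simpa using hall a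
    · have hΦ := hω.2 hcyc
      constructor
      · rw [List.nodup_flatten]
        constructor
        · intro l hl
          obtain ⟨b, -, hb⟩ := (hwsmem l).1 hl
          rw [← hb]
          exact phi_max_nodup (hΦ b).1 (hΦ b).2
        · refine List.Pairwise.imp_of_mem ?_ hwsnd
          intro l1 l2 h1 h2 hne
          obtain ⟨b1, -, hb1⟩ := (hwsmem l1).1 h1
          obtain ⟨b2, -, hb2⟩ := (hwsmem l2).1 h2
          subst hb1; subst hb2
          intro x hx1 hx2
          have e1 : ω b1 = ω x :=
            phi_max_unique (hΦ b1).1 (hΦ b1).2 (hΦ x).1 (hΦ x).2 hx1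
          have e2 : ω b2 = ω x :=
            phi_max_unique (hΦ b2).1 (hΦ b2).2 (hΦ x).1 (hΦ x).2 hx2
          exact hne (e1.trans e2.symm)
      · intro a ha
        rw [List.mem_flatten]
        exact ⟨ω a, (hwsmem (ω a)).2 ⟨a, ha, rfl⟩, singleton_infix.mp (hΦ a).1.2.1⟩
  obtain ⟨hnd, hmem⟩ := key
  refine ⟨?_, ?_, ?_, ?_⟩
  · intro a ha
    rw [leF_iff hnd]
    exact ⟨hmem a ha, hmem a ha, le_refl _⟩
  · intro a ha b hb h1 h2
    rw [leF_iff hnd] at h1 h2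
    exact (List.idxOf_inj (hmem a ha)).1 (le_antisymm h1.2.2 h2.2.2)
  · intro a ha b hb c hc h1 h2
    rw [leF_iff hnd] at h1 h2 ⊢
    exact ⟨hmem a ha, hmem c hc, h1.2.2.trans h2.2.2⟩
  · intro a ha b hb
    rw [leF_iff hnd, leF_iff hnd]
    rcases le_total (ws.flatten.idxOf a) (ws.flatten.idxOf b) with h | h
    · exact Or.inl ⟨hmem a ha, hmem b hb, h⟩
    · exact Or.inr ⟨hmem b hb, hmem a ha, h⟩

end UMPPaper
end

section
/- Let A = kQ/I be a special multiserial and locally monomial algebra and N a weakly connected component of G_{Q,I} with S_N = {s_1 <_s ⋯ <_s s_k}. Then each path m_i (0 ≤ i ≤ k) of Definition of S_N* does not lie in I_N, i.e., m_i ∉ I_N. -/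
namespace UMPPaper

variable {V A : Type}

/-! ### Auxiliary list lemmas -/

lemma aux_nodup_once {a b : List A} {x : A} (hn : (a ++ x :: b).Nodup) : x ∉ a ∧ x ∉ b := by
  rw [List.nodup_append] at hn
  exact ⟨fun hx => hn.2.2 x hx x List.mem_cons_self rfl, (List.nodup_cons.mp hn.2.1).1⟩

lemma aux_nodup_mid {l a b c d : List A} {x : A} (hn : l.Nodup) (h1 : l = a ++ x :: b)
    (h2 : l = c ++ x :: d) : a = c ∧ b = d := by
  have h : a ++ x :: b = c ++ x :: d := h1 ▸ h2
  rcases List.append_eq_append_iff.mp h with ⟨e, he, hx⟩ | ⟨e, he, hx⟩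
  · cases e with
    | nil => simp at he hx; exact ⟨he.symm, by simpa using hx⟩
    | cons y e' =>
      obtain ⟨rfl, rfl⟩ : x = y ∧ b = e' ++ x :: d := by simpa using hx
      exfalso
      exact (aux_nodup_once (h1 ▸ hn)).2 (by simp)
  · cases e with
    | nil => simp at he hx; exact ⟨he, by simpa using hx.symm⟩
    | cons y e' =>
      obtain ⟨rfl, rfl⟩ : x = y ∧ d = e' ++ x :: b := by simpa using hx
      exfalso
      exact (aux_nodup_once (h2 ▸ hn)).2 (by simp)

lemma aux_pair_split {X Y : List A} {c z : A} (h : [c, z] <:+: X ++ Y) :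
    [c, z] <:+: X ∨ [c, z] <:+: Y ∨ (X.getLast? = some c ∧ Y.head? = some z) := by
  obtain ⟨p, q, hpq⟩ := h
  rw [List.append_assoc] at hpq
  rcases List.append_eq_append_iff.mp hpq with ⟨e, he, hx⟩ | ⟨e, he, hx⟩
  · match e, hx with
    | [], hx => exact Or.inr (Or.inl ⟨[], q, by simpa using hx⟩)
    | [c'], hx =>
      obtain ⟨rfl, hY⟩ : c = c' ∧ z :: q = Y := by simpa using hx
      refine Or.inr (Or.inr ⟨?_, ?_⟩)
      · rw [he]; simp
      · rw [← hY]; rfl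
    | c' :: z' :: e', hx =>
      obtain ⟨rfl, rfl, hq⟩ : c = c' ∧ z = z' ∧ q = e' ++ Y := by simpa using hx
      exact Or.inl ⟨p, e', by rw [he]; simp⟩
  · exact Or.inr (Or.inl ⟨e, q, by rw [hx]; simp⟩)

lemma aux_zip_tail_adj : ∀ {l : List (List A)} {x y : List A},
    (x, y) ∈ l.zip l.tail → ∃ l1 l2, l = l1 ++ x :: y :: l2 := by
  intro l
  induction l with
  | nil => simp
  | cons a l' ih =>
    intro x y h
    cases l' with
    | nil => simp at h
    | cons b l'' =>
      simp only [List.tail_cons, List.zip_cons_cons, List.mem_cons] at h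
      rcases h with h | h
      · obtain ⟨rfl, rfl⟩ := Prod.mk.injEq .. ▸ h
        exact ⟨[], l'', by simp⟩
      · obtain ⟨l1, l2, hl⟩ := ih (by simpa using h)
        exact ⟨a :: l1, l2, by simp [hl]⟩

lemma aux_chain'_pairwise {R : List A → List A → Prop}
    (htr : ∀ a b c, R a b → R b c → R a c) :
    ∀ {l : List (List A)}, l.Chain' R → l.Pairwise R := by
  intro l
  induction l with
  | nil => simp
  | cons a l' ih =>
    intro h
    unfold List.Chain' at h
    rw [List.isChain_cons] at h
    have hpw := ih h.2
    refine List.Pairwise.cons ?_ hpw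
    intro b hb
    cases l' with
    | nil => simp at hb
    | cons c l'' =>
      have hac : R a c := h.1 c rfl
      rcases List.mem_cons.mp hb with rfl | hb'
      · exact hac
      · exact htr _ _ _ hac (List.rel_of_pairwise_cons hpw hb')

lemma aux_head?_dropLast {l : List A} (h : 2 ≤ l.length) : l.dropLast.head? = l.head? := by
  cases l with
  | nil => simp at h
  | cons a l' =>
    cases l' with
    | nil => simp at h
    | cons b l'' => simp

lemma aux_sublist_pair_split : ∀ {l : List A} {x : A}, List.Sublist [x, x] l →
    ∃ a b c, l = a ++ x :: b ++ x :: c := by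
  intro l
  induction l with
  | nil => intro x h; simp at h
  | cons y l' ih =>
    intro x h
    cases h with
    | cons _ h' =>
      obtain ⟨a, b, c, rfl⟩ := ih h'
      exact ⟨y :: a, b, c, by simp⟩
    | cons_cons _ h' =>
      obtain ⟨b, c, rfl⟩ := List.append_of_mem (List.singleton_sublist.mp h')
      exact ⟨[], b, c, by simp⟩

lemma aux_mem_iff_singleton_infix {l : List A} {x : A} : x ∈ l ↔ [x] <:+: l := by
  constructor
  · intro h
    obtain ⟨a, b, rfl⟩ := List.append_of_mem h
    exact ⟨a, b, by simp⟩
  · rintro ⟨a, b, rfl⟩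
    simp

/-! ### Alignment machinery for maximal paths -/

lemma aux_fwd_align (f g : A → V) : ∀ (l1 : List A) (b : A) (l2 : List A),
    List.Chain' (fun a c => g a = f c) (b :: l1) →
    List.Chain' (fun a c => g a = f c) (b :: l2) →
    (∀ x ∈ (b :: l1).dropLast, ∃! c, f c = g x) →
    (∀ x ∈ (b :: l2).dropLast, ∃! c, f c = g x) →
    l1 <+: l2 ∨ l2 <+: l1 := by
  intro l1
  induction l1 with
  | nil => intro b l2 _ _ _ _; exact Or.inl (List.nil_prefix)
  | cons c l1' ih =>
    intro b l2 h1 h2 u1 u2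
    cases l2 with
    | nil => exact Or.inr List.nil_prefix
    | cons c' l2' =>
      have hb : b ∈ (b :: c :: l1').dropLast := by
        rw [show (b :: c :: l1') = [b] ++ (c :: l1') from rfl,
          List.dropLast_append_of_ne_nil (by simp)]
        simp
      have hbc : g b = f c := (List.isChain_cons_cons.mp h1).1
      have hbc' : g b = f c' := (List.isChain_cons_cons.mp h2).1
      have hcc : c = c' := (u1 b hb).unique hbc.symm hbc'.symm
      subst hcc
      have hrec := ih c l2' (List.isChain_cons_cons.mp h1).2 (List.isChain_cons_cons.mp h2).2
        (fun x hx => u1 x (by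
          rw [show (b :: c :: l1') = [b] ++ (c :: l1') from rfl,
            List.dropLast_append_of_ne_nil (by simp)]
          exact List.mem_append_right _ hx))
        (fun x hx => u2 x (by
          rw [show (b :: c :: l2') = [b] ++ (c :: l2') from rfl,
            List.dropLast_append_of_ne_nil (by simp)]
          exact List.mem_append_right _ hx))
      rcases hrec with h | h
      · obtain ⟨r, hr⟩ := h
        exact Or.inl ⟨r, by simp [← hr]⟩
      · obtain ⟨r, hr⟩ := h
        exact Or.inr ⟨r, by simp [← hr]⟩

lemma aux_chain_pred (s t : A → V) : ∀ {l : List A},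
    List.Chain' (fun a b => t a = s b) l →
    ∀ {x : A}, x ∈ l.tail → ∃ y ∈ l, t y = s x := by
  intro l
  induction l with
  | nil => simp
  | cons a l' ih =>
    intro h x hx
    simp only [List.tail_cons] at hx
    cases l' with
    | nil => simp at hx
    | cons b l'' =>
      rcases List.mem_cons.mp hx with rfl | hx'
      · exact ⟨a, by simp, (List.isChain_cons_cons.mp h).1⟩
      · obtain ⟨y, hy, hty⟩ := ih (List.isChain_cons_cons.mp h).2 hx'
        exact ⟨y, List.mem_cons_of_mem _ hy, hty⟩

lemma aux_bwd_align (s t : A → V) (l1 : List A) (b : A) (l2 : List A)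
    (h1 : List.Chain' (fun a c => t a = s c) (l1 ++ [b]))
    (h2 : List.Chain' (fun a c => t a = s c) (l2 ++ [b]))
    (u1 : ∀ x ∈ l1, ∃! c, t c = t x) (u2 : ∀ x ∈ l2, ∃! c, t c = t x) :
    l1 <:+ l2 ∨ l2 <:+ l1 := by
  have key : ∀ (l : List A), List.Chain' (fun a c => t a = s c) (l ++ [b]) →
      (∀ x ∈ l, ∃! c, t c = t x) →
      (∀ x ∈ (b :: l.reverse).dropLast, ∃! c, t c = s x) := by
    intro l hch hu x hx
    have hx' : x ∈ (l ++ [b]).tail := by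
      cases l with
      | nil => simp at hx
      | cons a l' =>
        rw [show (b :: (a :: l').reverse) = ((a :: l') ++ [b]).reverse by simp,
          List.dropLast_reverse, List.mem_reverse] at hx
        simpa using hx
    have hxl : x = b ∨ x ∈ l.tail := by
      cases l with
      | nil => simp at hx
      | cons a l' =>
        simp only [List.cons_append, List.tail_cons] at hx'
        rcases List.mem_append.mp hx' with h | h
        · exact Or.inr h
        · exact Or.inl (by simpa using h)
    rcases hxl with hxb | hxt
    · rw [hxb]
      have hlne : l ≠ [] := by rintro rfl; rw [hxb] at hx; simp at hx
      have hgl := (List.isChain_append.mp hch).2.2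
      have hgl' : t (l.getLast hlne) = s b := by
        apply hgl
        · rw [List.getLast?_eq_getLast hlne]; rfl
        · rfl
      have := hu (l.getLast hlne) (List.getLast_mem hlne)
      rwa [hgl'] at this
    · obtain ⟨y, hy, hty⟩ := aux_chain_pred s t (hch.prefix (List.prefix_append l [b])) hxt
      have := hu y hy
      rwa [hty] at this
  have c1 : List.Chain' (fun a c => s a = t c) (b :: l1.reverse) := by
    rw [show (b :: l1.reverse) = (l1 ++ [b]).reverse by simp]
    unfold List.Chain'
    rw [List.isChain_reverse]
    exact List.IsChain.imp (fun a c h => h.symm) h1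
  have c2 : List.Chain' (fun a c => s a = t c) (b :: l2.reverse) := by
    rw [show (b :: l2.reverse) = (l2 ++ [b]).reverse by simp]
    unfold List.Chain'
    rw [List.isChain_reverse]
    exact List.IsChain.imp (fun a c h => h.symm) h2
  have := aux_fwd_align t s l1.reverse b l2.reverse c1 c2 (key l1 h1 u1) (key l2 h2 u2)
  rcases this with h | h
  · exact Or.inl (List.reverse_prefix.mp h)
  · exact Or.inr (List.reverse_prefix.mp h)

lemma aux_union_phi {s t : A → V} {b : A} {p q p1 p2 q1 q2 : List A}
    (hp : p ∈ Phi s t b) (hq : q ∈ Phi s t b)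
    (e1 : p = p1 ++ b :: p2) (e2 : q = q1 ++ b :: q2) : p1 ++ b :: q2 ∈ Phi s t b := by
  obtain ⟨⟨hpne, hpch⟩, hpinf, hpint⟩ := hp
  obtain ⟨⟨hqne, hqch⟩, hqinf, hqint⟩ := hq
  have hp1 : List.Chain' (fun a c => t a = s c) (p1 ++ [b]) :=
    hpch.prefix ⟨p2, by simp [e1]⟩
  have hq2 : List.Chain' (fun a c => t a = s c) (b :: q2) :=
    hqch.suffix ⟨q1, e2.symm⟩
  refine ⟨⟨by simp, ?_⟩, ⟨p1, q2, by simp⟩, ?_⟩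
  · rw [show p1 ++ b :: q2 = p1 ++ ([b] ++ q2) from by simp]
    unfold List.Chain'
    rw [List.isChain_append]
    refine ⟨hp1.prefix ⟨[b], by simp⟩, hq2, ?_⟩
    intro x hx y hy
    have hyb : b = y := by simpa using hy
    subst hyb
    exact (List.isChain_append.mp hp1).2.2 x hx b rfl
  · intro x hx
    have hps : p1 ⊆ p.dropLast := by
      rw [e1, show p1 ++ b :: p2 = p1 ++ (b :: p2) from rfl,
        List.dropLast_append_of_ne_nil (by simp)]
      exact fun _ h => List.mem_append_left _ h
    cases q2 with
    | nil =>
      rw [List.dropLast_concat] at hx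
      exact hpint x (hps hx)
    | cons w q2' =>
      rw [show p1 ++ b :: w :: q2' = p1 ++ (b :: w :: q2') from rfl,
        List.dropLast_append_of_ne_nil (by simp),
        show (b :: w :: q2') = [b] ++ (w :: q2') from rfl,
        List.dropLast_append_of_ne_nil (by simp)] at hx
      rcases List.mem_append.mp hx with h | h
      · exact hpint x (hps h)
      · rcases List.mem_append.mp h with h' | h'
        · have hb : b ∈ q.dropLast := by
            rw [e2, show q1 ++ b :: w :: q2' = (q1 ++ [b]) ++ (w :: q2') from by simp,
              List.dropLast_append_of_ne_nil (by simp)]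
            exact List.mem_append_left _ (by simp)
          have hxb : x = b := by simpa using h'
          subst hxb
          exact hqint x hb
        · have : x ∈ q.dropLast := by
            rw [e2, show q1 ++ b :: w :: q2' = (q1 ++ [b]) ++ (w :: q2') from by simp,
              List.dropLast_append_of_ne_nil (by simp)]
            exact List.mem_append_right _ h'
          exact hqint x this

lemma aux_max_align {s t : A → V} {b : A} {p q p1 p2 q1 q2 : List A}
    (hp : p ∈ Phi s t b) (hq : q ∈ Phi s t b)
    (hmax : ∀ r ∈ Phi s t b, r.length ≤ q.length)
    (e1 : p = p1 ++ b :: p2) (e2 : q = q1 ++ b :: q2) : p1 <:+ q1 ∧ p2 <+: q2 := by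
  have hU1 := aux_union_phi hp hq e1 e2
  have hU2 := aux_union_phi hq hp e2 e1
  have hl1 : p1.length ≤ q1.length := by
    have := hmax _ hU1
    rw [e2] at this
    simp at this; omega
  have hl2 : p2.length ≤ q2.length := by
    have := hmax _ hU2
    rw [e2] at this
    simp at this; omega
  obtain ⟨⟨hpne, hpch⟩, hpinf, hpint⟩ := hp
  obtain ⟨⟨hqne, hqch⟩, hqinf, hqint⟩ := hq
  have hdlp : p.dropLast = p1 ++ (b :: p2).dropLast := by
    rw [e1, show p1 ++ b :: p2 = p1 ++ (b :: p2) from rfl,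
      List.dropLast_append_of_ne_nil (by simp)]
  have hdlq : q.dropLast = q1 ++ (b :: q2).dropLast := by
    rw [e2, show q1 ++ b :: q2 = q1 ++ (b :: q2) from rfl,
      List.dropLast_append_of_ne_nil (by simp)]
  have hsuf := aux_bwd_align s t p1 b q1
    (hpch.prefix ⟨p2, by simp [e1]⟩) (hqch.prefix ⟨q2, by simp [e2]⟩)
    (fun x hx => (hpint x (by rw [hdlp]; exact List.mem_append_left _ hx)).2)
    (fun x hx => (hqint x (by rw [hdlq]; exact List.mem_append_left _ hx)).2)
  have hpre := aux_fwd_align s t p2 b q2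
    (hpch.suffix ⟨p1, e1.symm⟩) (hqch.suffix ⟨q1, e2.symm⟩)
    (fun x hx => (hpint x (by
      rw [hdlp]
      refine List.mem_append_right _ ?_
      cases p2 with
      | nil => simp at hx
      | cons w p2' => exact hx)).1)
    (fun x hx => (hqint x (by
      rw [hdlq]
      refine List.mem_append_right _ ?_
      cases q2 with
      | nil => simp at hx
      | cons w q2' => exact hx)).1)
  constructor
  · rcases hsuf with h | h
    · exact h
    · have : q1.length = p1.length := le_antisymm h.length_le hl1
      rw [h.eq_of_length this]
  · rcases hpre with h | h
    · exact h
    · have : q2.length = p2.length := le_antisymm h.length_le hl2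
      rw [h.eq_of_length this]

/-! ### Properties of the maximal paths `ω a` -/

variable {s t : A → V} {ω : A → List A}

lemma aux_omega_self (hω : OmegaSpec s t ω) (a : A) : a ∈ ω a := by
  by_cases hc : IsCyclicQuiver s t
  · obtain ⟨p, _, _, hall, _, heq⟩ := hω.1 hc
    rw [heq a]; exact hall a
  · exact aux_mem_iff_singleton_infix.mpr (hω.2 hc a).1.2.1

lemma aux_omega_ne (hω : OmegaSpec s t ω) (a : A) : ω a ≠ [] := by
  by_cases hc : IsCyclicQuiver s t
  · obtain ⟨p, hp, _, _, _, heq⟩ := hω.1 hc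
    rw [heq a]; exact hp.1
  · exact (hω.2 hc a).1.1.1

lemma aux_omega_mem_phi (hω : OmegaSpec s t ω) (hnc : ¬ IsCyclicQuiver s t)
    {a x : A} (hx : x ∈ ω a) : ω a ∈ Phi s t x := by
  obtain ⟨hPa, _⟩ := hω.2 hnc a
  exact ⟨hPa.1, aux_mem_iff_singleton_infix.mp hx, hPa.2.2⟩

lemma aux_omega_nodup (hω : OmegaSpec s t ω) (a : A) : (ω a).Nodup := by
  by_cases hc : IsCyclicQuiver s t
  · obtain ⟨p, _, hnd, _, _, heq⟩ := hω.1 hc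
    rw [heq a]; exact hnd
  · by_contra hnd
    rw [List.nodup_iff_sublist] at hnd
    push_neg at hnd
    obtain ⟨x, hsub⟩ := hnd
    obtain ⟨α, β, γ, hdec⟩ := aux_sublist_pair_split hsub
    have hx : x ∈ ω a := by rw [hdec]; simp
    have hp := aux_omega_mem_phi hω hc hx
    have e1 : ω a = (α ++ x :: β) ++ x :: γ := by rw [hdec]
    have e2 : ω a = α ++ x :: (β ++ x :: γ) := by rw [hdec]; simp
    have hU := aux_union_phi hp hp e1 e2
    obtain ⟨hUpath, _, hUint⟩ := hU
    have haU : a ∈ (α ++ x :: β) ++ x :: (β ++ x :: γ) := by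
      have := aux_omega_self hω a
      rw [hdec] at this
      simp only [List.mem_append, List.mem_cons] at this ⊢
      tauto
    have hUA : (α ++ x :: β) ++ x :: (β ++ x :: γ) ∈ Phi s t a :=
      ⟨hUpath, aux_mem_iff_singleton_infix.mp haU, hUint⟩
    have := (hω.2 hc a).2 _ hUA
    rw [hdec] at this
    simp at this
    omega

lemma aux_omega_eq (hω : OmegaSpec s t ω) {a x : A} (hx : x ∈ ω a) : ω x = ω a := by
  by_cases hc : IsCyclicQuiver s t
  · obtain ⟨p, _, _, _, _, heq⟩ := hω.1 hc
    rw [heq a, heq x]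
  · have hp : ω a ∈ Phi s t x := aux_omega_mem_phi hω hc hx
    have hq : ω x ∈ Phi s t x := (hω.2 hc x).1
    obtain ⟨p1, p2, e1⟩ := List.append_of_mem hx
    obtain ⟨q1, q2, e2⟩ := List.append_of_mem (aux_omega_self hω x)
    have hmax : ∀ r ∈ Phi s t x, r.length ≤ (ω x).length := (hω.2 hc x).2
    obtain ⟨hsuf, hpre⟩ := aux_max_align hp hq hmax e1 e2
    have hlen1 : (ω a).length ≤ (ω x).length := hmax _ hp
    have haX : a ∈ ω x := by
      have := aux_omega_self hω a
      rw [e1] at this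
      rw [e2]
      simp only [List.mem_append, List.mem_cons] at this ⊢
      rcases this with h | h
      · exact Or.inl (hsuf.subset h)
      · rcases h with h | h
        · exact Or.inr (Or.inl h)
        · exact Or.inr (Or.inr (hpre.subset h))
    have hXa : ω x ∈ Phi s t a := aux_omega_mem_phi hω hc haX
    have hlen2 : (ω x).length ≤ (ω a).length := (hω.2 hc a).2 _ hXa
    have h1 : p1.length = q1.length ∧ p2.length = q2.length := by
      have l1 := hsuf.length_le
      have l2 := hpre.length_le
      have : (ω a).length = (ω x).length := le_antisymm hlen1 hlen2
      rw [e1, e2] at this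
      simp at this
      omega
    rw [e1, e2, hsuf.eq_of_length h1.1, hpre.eq_of_length h1.2]

/-- for a special multiserial, locally monomial algebra and a component `N`
with `S_N = {s_1 <_s ⋯ <_s s_k}`, none of the paths `m_i` (`0 ≤ i ≤ k`) of the
definition of `S_N^*` lies in `I_N`. -/
theorem stmt_13 [Fintype V] [Fintype A] (s t : A → V) (Zi : List A → Prop)
    (ω : A → List A) (hω : OmegaSpec s t ω)
    (hZ : ZeroClosed Zi) (hadm : Admissible s t Zi)
    (hsm : SpecialMultiserial s t Zi)
    (N : Set A) (hN : IsComp s t Zi ω N)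
    (ws : List (List A)) (hws : CompEnum s t Zi ω N ws)
    (R : Set (List A)) (hR : MinGen s t Zi N R)
    (ss : List (List A)) (hss : SEnum ws.flatten (SRel ω N R) ss) (hk : ss ≠ []) :
    ∀ m : List A, IsMi s t Zi ws.flatten ss m → ¬ Zi m := by
  classical
  obtain ⟨hws_ne, hws_nd, hws_mem, hws_ch, hWpath⟩ := hws
  obtain ⟨hss_nd, hss_mem, hss_ch⟩ := hss
  obtain ⟨hRrel, hRgen, hRmin⟩ := hR
  obtain ⟨a0, hNdef⟩ := hN
  have hWch : ws.flatten.Chain' (fun a b => t a = s b) := hWpath.2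
  have hWnd : ws.flatten.Nodup := by
    rw [List.nodup_flatten]
    constructor
    · intro l hl
      obtain ⟨a, -, rfl⟩ := (hws_mem l).1 hl
      exact aux_omega_nodup hω a
    · refine List.Pairwise.imp_of_mem ?_ hws_nd
      intro p q hp hq hne
      obtain ⟨a, -, rfl⟩ := (hws_mem p).1 hp
      obtain ⟨b, -, rfl⟩ := (hws_mem q).1 hq
      intro xx hxa hxb
      exact hne ((aux_omega_eq hω hxa).symm.trans (aux_omega_eq hω hxb))
  have hWarr : ∀ x ∈ ws.flatten, x ∈ N := by
    intro x hx
    obtain ⟨l, hl, hxl⟩ := List.mem_flatten.mp hx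
    obtain ⟨a, haN, rfl⟩ := (hws_mem l).1 hl
    have h1 : SameComp s t Zi ω a0 a := by rw [hNdef] at haN; exact haN
    have h2 : RAdj s t Zi ω a x := Or.inl (aux_omega_eq hω hxl).symm
    rw [hNdef]
    exact Relation.ReflTransGen.tail h1 h2
  have honce : ∀ {x : A} {a b : List A}, ws.flatten = a ++ x :: b → x ∉ a ∧ x ∉ b :=
    fun h => aux_nodup_once (h ▸ hWnd)
  have hdisj : ∀ {a b : List A}, ws.flatten = a ++ b →
      ∀ {c : A}, c ∈ a → c ∈ b → False := by
    intro a b h c hca hcb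
    have h2 := h ▸ hWnd
    rw [List.nodup_append] at h2
    exact h2.2.2 c hca c hcb rfl
  have hleF : ∀ {a b : List A} {x y : A}, ws.flatten = a ++ x :: b →
      leF ws.flatten x y → y ∈ x :: b := by
    intro a b x y hdec hf
    obtain ⟨u, u', hu, hy⟩ := hf
    obtain ⟨-, h2⟩ := aux_nodup_mid hWnd hu hdec
    rwa [h2] at hy
  have hpw : ss.Pairwise (leS ws.flatten) := by
    refine aux_chain'_pairwise ?_ (List.IsChain.imp (fun a b h => h.1) hss_ch)
    rintro p q r ⟨x, hx, y, hy, hxy⟩ ⟨y', hy', z, hz, hyz⟩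
    rw [Option.mem_def] at hy hy'
    rw [hy] at hy'
    have hyy : y = y' := Option.some_inj.mp hy'
    subst hyy
    refine ⟨x, hx, z, hz, ?_⟩
    obtain ⟨u1, u1', h1, hyy⟩ := hxy
    rcases List.mem_cons.mp hyy with rfl | hy1
    · exact hyz
    · obtain ⟨e1, e2, he⟩ := List.append_of_mem hy1
      have hdec2 : ws.flatten = (u1 ++ x :: e1) ++ y :: e2 := by rw [h1, he]; simp
      have hz2 := hleF hdec2 hyz
      refine ⟨u1, u1', h1, ?_⟩
      rw [he]
      rcases List.mem_cons.mp hz2 with rfl | hz2'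
      · simp
      · simp only [List.mem_cons, List.mem_append]; tauto
  have hsubR : ∀ r ∈ ss, r ∈ R ∧ ¬ IsJuncRel ω N r := by
    intro r hr
    exact (hss_mem r).1 hr
  have hZR : ∀ r ∈ R, Zi r ∧ 2 ≤ r.length ∧ PathIn s t N r := by
    intro r hr
    exact ⟨(hRrel r hr).2, hadm.1 r (hRrel r hr).2, (hRrel r hr).1⟩
  have hQuad : ∀ c z : A, c ∈ N → z ∈ N → t c = s z → Zi [c, z] → [c, z] ∈ R := by
    intro c z hcN hzN hcz hZ
    have hpi : PathIn s t N [c, z] := by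
      refine ⟨⟨by simp, List.isChain_pair.mpr hcz⟩, ?_⟩
      intro w hw
      rcases List.mem_cons.mp hw with rfl | hw'
      · exact hcN
      · rcases List.mem_cons.mp hw' with rfl | hw''
        · exact hzN
        · simp at hw''
    obtain ⟨r', hr'R, hr'inf⟩ := (hRgen _ hpi).1 hZ
    have hlen : r'.length = 2 := le_antisymm (by simpa using hr'inf.length_le)
      (hZR r' hr'R).2.1
    have : r' = [c, z] := hr'inf.eq_of_length (by simp [hlen])
    rwa [← this]
  have hQS : ∀ sr ∈ ss, ∀ c z : A, [c, z] <:+: sr.dropLast → ¬ Zi [c, z] := by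
    intro sr hsr c z hinf hZ
    obtain ⟨hsrR, -⟩ := hsubR sr hsr
    obtain ⟨hZsr, hlensr, hPIsr⟩ := hZR sr hsrR
    have hinf' : [c, z] <:+: sr := hinf.trans (List.dropLast_prefix sr).isInfix
    have hcz : t c = s z := by
      have hch := hPIsr.1.2.infix hinf'
      rw [List.isChain_pair] at hch
      exact hch
    have hcN := hPIsr.2 c (hinf'.subset (by simp))
    have hzN := hPIsr.2 z (hinf'.subset (by simp))
    have h2 := hRmin _ (hQuad c z hcN hzN hcz hZ) _ hsrR hinf'
    have hle := hinf.length_le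
    rw [← h2, List.length_dropLast] at hle
    simp at hle
  have hSin : ∀ r ∈ R, ∀ sr ∈ ss, ¬ r <:+: sr.dropLast := by
    intro r hrR sr hsr hinf
    have heq := hRmin r hrR sr (hsubR sr hsr).1
      (hinf.trans (List.dropLast_prefix sr).isInfix)
    have hle := hinf.length_le
    rw [heq, List.length_dropLast] at hle
    have h2 := (hZR sr (hsubR sr hsr).1).2.1
    omega
  have hJW : ∀ (a : A) (c z : A), a ∈ N → (ω a).getLast? = some c →
      [c, z] <:+: ws.flatten → ¬ Zi [c, z] := by
    intro a c z haN hc hinf hZ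
    have hmem : ω a ∈ ws := (hws_mem (ω a)).2 ⟨a, haN, rfl⟩
    obtain ⟨w1, w2, hwsdec⟩ := List.append_of_mem hmem
    obtain ⟨ia, hia⟩ := List.getLast?_eq_some_iff.mp hc
    have hWdec1 : ws.flatten = (w1.flatten ++ ia) ++ c :: w2.flatten := by
      rw [hwsdec, show w1 ++ ω a :: w2 = w1 ++ ([ω a] ++ w2) from rfl,
        List.flatten_append, List.flatten_append]
      simp [hia]
    obtain ⟨pp, qq, hppq⟩ := hinf
    have hWdec2 : ws.flatten = pp ++ c :: (z :: qq) := by rw [← hppq]; simp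
    obtain ⟨-, h2⟩ := aux_nodup_mid hWnd hWdec1 hWdec2
    cases w2 with
    | nil => simp at h2
    | cons q2 w2' =>
      obtain ⟨b2, hb2N, hq2⟩ := (hws_mem q2).1 (by rw [hwsdec]; simp)
      have hq2ne : q2 ≠ [] := by rw [← hq2]; exact aux_omega_ne hω b2
      cases q2 with
      | nil => exact hq2ne rfl
      | cons zq q2t =>
        have hzq : zq = z := by
          rw [List.flatten_cons] at h2
          have := congrArg List.head? h2
          simpa using this
        have hpair : JunctionOK s t Zi (ω a) (zq :: q2t) := by
          have hinf2 : [ω a, zq :: q2t] <:+: ws := ⟨w1, w2', by rw [hwsdec]; simp⟩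
          have hch := hws_ch.infix hinf2
          rw [List.isChain_pair] at hch
          exact hch
        obtain ⟨xx, hxx, yy, hyy, -, hnz⟩ := hpair
        rw [Option.mem_def, hc] at hxx
        have hxxc : xx = c := Option.some_inj.mp hxx.symm
        have hyyz : yy = z := by
          rw [Option.mem_def] at hyy
          simp only [List.head?_cons] at hyy
          rw [← hzq]
          exact Option.some_inj.mp hyy.symm
        rw [hxxc, hyyz] at hnz
        exact hnz hZ
  have hopt : ∀ {β : Type} {o : Option β} {a b : β}, a ∈ o → o = some b → a = b := by
    intro β o a b h1 h2
    rw [h2] at h1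
    exact (Option.some_inj.mp (Option.mem_def.mp h1)).symm
  intro m him
  rcases him with hcase | hcase | hcase | hcase
  · -- case 0 < i < k
    obtain ⟨⟨si, sj⟩, hzip, u, v, v', x, hxh, y, hyh, hWdec, hmdec⟩ := hcase
    simp only at hxh hyh hmdec
    obtain ⟨l1, l2, hssdec⟩ := aux_zip_tail_adj hzip
    have hsi_ss : si ∈ ss := by rw [hssdec]; simp
    have hsj_ss : sj ∈ ss := by rw [hssdec]; simp
    have hsjR := (hsubR sj hsj_ss).1
    obtain ⟨hZsj, hlensj, hPIsj⟩ := hZR sj hsjR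
    have hxh' : si.head? = some x := Option.mem_def.mp hxh
    have hyh' : sj.head? = some y := Option.mem_def.mp hyh
    have hdhead : sj.dropLast.head? = some y := by
      rw [aux_head?_dropLast hlensj]; exact hyh'
    have hdne : sj.dropLast ≠ [] := by intro h; rw [h] at hdhead; simp at hdhead
    have hWx : ws.flatten = u ++ x :: (v ++ y :: v') := by rw [hWdec]; simp
    have hWy : ws.flatten = (u ++ x :: v) ++ y :: v' := by rw [hWdec]; simp
    have hvW : v <:+: ws.flatten := ⟨u ++ [x], y :: v', by rw [hWdec]; simp⟩
    have hPIm : PathIn s t N m := by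
      refine ⟨⟨?_, ?_⟩, ?_⟩
      · rw [hmdec]; intro h; exact hdne (List.append_eq_nil_iff.mp h).2
      · rw [hmdec]
        unfold List.Chain'
        rw [List.isChain_append]
        refine ⟨hWch.infix hvW, hPIsj.1.2.prefix (List.dropLast_prefix sj), ?_⟩
        intro cc hcc zz hzz
        have hzzy : zz = y := hopt hzz hdhead
        rw [hzzy]
        have hchvy : List.Chain' (fun a b => t a = s b) (v ++ [y]) :=
          hWch.infix ⟨u ++ [x], v', by rw [hWdec]; simp⟩
        exact (List.isChain_append.mp hchvy).2.2 cc hcc y rfl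
      · intro cc hcc
        rw [hmdec] at hcc
        rcases List.mem_append.mp hcc with h | h
        · exact hWarr cc (hvW.subset h)
        · exact hPIsj.2 cc (List.dropLast_subset _ h)
    intro hZm
    obtain ⟨r, hrR, hrm⟩ := (hRgen m hPIm).1 hZm
    have hZr := (hZR r hrR).1
    by_cases hjr : IsJuncRel ω N r
    · obtain ⟨a, haN, b, hbN, c, hcg, z, hzh, rfl⟩ := hjr
      have hcg' : (ω a).getLast? = some c := Option.mem_def.mp hcg
      rw [hmdec] at hrm
      rcases aux_pair_split hrm with h | h | ⟨h1, h2⟩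
      · exact hJW a c z haN hcg' (h.trans hvW) hZr
      · exact hQS sj hsj_ss c z h hZr
      · have hzy : z = y := by rw [hdhead] at h2; exact (Option.some_inj.mp h2).symm
        subst hzy
        obtain ⟨vi, hvi⟩ := List.getLast?_eq_some_iff.mp h1
        have hin : [c, z] <:+: ws.flatten :=
          ⟨u ++ [x] ++ vi, v', by rw [hWdec, hvi]; simp⟩
        exact hJW a c z haN hcg' hin hZr
    · have hrss : r ∈ ss := (hss_mem r).2 ⟨hrR, hjr⟩
      obtain ⟨pp, qq, hppq⟩ := hrm
      rw [hmdec] at hppq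
      rw [List.append_assoc] at hppq
      rcases List.append_eq_append_iff.mp hppq with ⟨e, hv, h2⟩ | ⟨e, hpp2, h2⟩
      · cases e with
        | nil =>
          exact hSin r hrR sj hsj_ss ⟨[], qq, by simpa using h2⟩
        | cons h e' =>
          obtain ⟨rh, rt, rfl⟩ : ∃ rh rt, r = rh :: rt := by
            cases r with
            | nil => exact absurd (hZR [] hrR).2.1 (by simp)
            | cons a l => exact ⟨a, l, rfl⟩
          have hrh : rh = h := by
            have := congrArg List.head? h2
            simpa using this
          subst hrh
          have hWh : ws.flatten = (u ++ x :: pp) ++ rh :: (e' ++ y :: v') := by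
            rw [hWx, hv]; simp
          have hxe : x ∉ v ++ y :: v' := (honce hWx).2
          have hye : y ∉ u ++ x :: v := (honce hWy).1
          have hhv : rh ∈ v := by rw [hv]; simp
          rw [hssdec] at hrss hpw
          rcases List.mem_append.mp hrss with hrl1 | hrl
          · have hle : leS ws.flatten (rh :: rt) si :=
              (List.pairwise_append.mp hpw).2.2 _ hrl1 si (by simp)
            obtain ⟨h', hh', x', hx', hfl⟩ := hle
            have hh'2 : h' = rh := hopt hh' rfl
            have hx'2 : x' = x := hopt hx' hxh'
            subst hh'2; subst hx'2
            have hxin := hleF hWh hfl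
            refine hxe ?_
            rcases List.mem_cons.mp hxin with heq2 | hin
            · rw [heq2]; exact List.mem_append_left _ hhv
            · rcases List.mem_append.mp hin with h1 | h1
              · exact List.mem_append_left _ (by rw [hv]; simp [h1])
              · exact List.mem_append_right _ h1
          · rcases List.mem_cons.mp hrl with heq | hrl'
            · have hxh2 : x = rh := by
                rw [← heq, List.head?_cons] at hxh'
                exact (Option.some_inj.mp hxh').symm
              exact hxe (List.mem_append_left _ (hxh2 ▸ hhv))
            · rcases List.mem_cons.mp hrl' with heq | hrl2
              · have hhy : y = rh := by
                  rw [← heq, List.head?_cons] at hyh'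
                  exact (Option.some_inj.mp hyh').symm
                exact hye (List.mem_append_right _ (List.mem_cons_of_mem _ (hhy ▸ hhv)))
              · have hle : leS ws.flatten sj (rh :: rt) := by
                  have hpw2 := (List.pairwise_append.mp hpw).2.1
                  exact List.rel_of_pairwise_cons (List.pairwise_cons.mp hpw2).2 hrl2
                obtain ⟨y', hy2, h', hh', hfl⟩ := hle
                have : y' = y := hopt hy2 hyh'
                subst this
                have : h' = rh := hopt hh' rfl
                subst this
                have hhin := hleF hWy hfl
                rcases List.mem_cons.mp hhin with heq2 | hin
                · rw [heq2] at hhv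
                  exact hye (List.mem_append_right _ (List.mem_cons_of_mem _ hhv))
                · exact hdisj hWy (List.mem_append_right _ (List.mem_cons_of_mem _ hhv))
                    (List.mem_cons_of_mem _ hin)
      · exact hSin r hrR sj hsj_ss ⟨e, qq, by rw [h2]; simp⟩
  · -- case i = 0, zero junction
    obtain ⟨hnJ, s1, hs1, u, zz, hWdec, hmdec⟩ := hcase
    have hs1' : ss.head? = some s1 := Option.mem_def.mp hs1
    obtain ⟨sstl, hsseq⟩ : ∃ tl, ss = s1 :: tl := by
      cases ss with
      | nil => simp at hs1'
      | cons a l => exact ⟨l, by rw [show a = s1 by simpa using hs1']⟩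
    have hs1ss : s1 ∈ ss := by rw [hsseq]; simp
    have hpw1 : List.Pairwise (leS ws.flatten) (s1 :: sstl) := hsseq ▸ hpw
    have hlb : ∀ r ∈ ss, r = s1 ∨ leS ws.flatten s1 r := by
      intro r hr
      rw [hsseq] at hr
      rcases List.mem_cons.mp hr with rfl | hr'
      · exact Or.inl rfl
      · exact Or.inr (List.rel_of_pairwise_cons hpw1 hr')
    have hs1R := (hsubR s1 hs1ss).1
    obtain ⟨hZs1, hlens1, hPIs1⟩ := hZR s1 hs1R
    obtain ⟨x, s1t, rfl⟩ : ∃ a l, s1 = a :: l := by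
      cases s1 with
      | nil => exact absurd hlens1 (by simp)
      | cons a l => exact ⟨a, l, rfl⟩
    have hWx : ws.flatten = u ++ x :: (s1t ++ zz) := by rw [hWdec]; simp
    have hdhead : (x :: s1t).dropLast.head? = some x := by
      rw [aux_head?_dropLast hlens1]; rfl
    have hdne : (x :: s1t).dropLast ≠ [] := by
      intro h; rw [h] at hdhead; simp at hdhead
    have huW : u <:+: ws.flatten := ⟨[], x :: (s1t ++ zz), by rw [hWx]; simp⟩
    have hchux : List.Chain' (fun a b => t a = s b) (u ++ [x]) :=
      hWch.prefix ⟨s1t ++ zz, by rw [hWx]; simp⟩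
    have hPIm : PathIn s t N m := by
      refine ⟨⟨?_, ?_⟩, ?_⟩
      · rw [hmdec]; intro h; exact hdne (List.append_eq_nil_iff.mp h).2
      · rw [hmdec]
        unfold List.Chain'
        rw [List.isChain_append]
        refine ⟨hWch.infix huW, hPIs1.1.2.prefix (List.dropLast_prefix _), ?_⟩
        intro cc hcc zz2 hzz
        have hzz2 : zz2 = x := hopt hzz hdhead
        rw [hzz2]
        exact (List.isChain_append.mp hchux).2.2 cc hcc x rfl
      · intro cc hcc
        rw [hmdec] at hcc
        rcases List.mem_append.mp hcc with h | h
        · exact hWarr cc (huW.subset h)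
        · exact hPIs1.2 cc (List.dropLast_subset _ h)
    intro hZm
    obtain ⟨r, hrR, hrm⟩ := (hRgen m hPIm).1 hZm
    have hZr := (hZR r hrR).1
    by_cases hjr : IsJuncRel ω N r
    · obtain ⟨a, haN, b, hbN, c, hcg, z, hzh, rfl⟩ := hjr
      have hcg' : (ω a).getLast? = some c := Option.mem_def.mp hcg
      rw [hmdec] at hrm
      rcases aux_pair_split hrm with h | h | ⟨h1, h2⟩
      · exact hJW a c z haN hcg' (h.trans huW) hZr
      · exact hQS _ hs1ss c z h hZr
      · have hzx : z = x := by
          rw [hdhead] at h2; exact (Option.some_inj.mp h2).symm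
        subst hzx
        obtain ⟨ui, hui⟩ := List.getLast?_eq_some_iff.mp h1
        have hin : [c, z] <:+: ws.flatten := ⟨ui, s1t ++ zz, by rw [hWx, hui]; simp⟩
        exact hJW a c z haN hcg' hin hZr
    · have hrss : r ∈ ss := (hss_mem r).2 ⟨hrR, hjr⟩
      obtain ⟨rh, rt, rfl⟩ : ∃ a l, r = a :: l := by
        cases r with
        | nil => exact absurd (hZR [] hrR).2.1 (by simp)
        | cons a l => exact ⟨a, l, rfl⟩
      have hinu : rh ∈ u → False := by
        intro hhu
        rcases hlb _ hrss with heq | hle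
        · have hx2 : rh = x := by simpa using congrArg List.head? heq
          exact (honce hWx).1 (hx2 ▸ hhu)
        · obtain ⟨x', hx', h', hh', hfl⟩ := hle
          have e1 : x' = x := hopt hx' rfl
          have e2 : h' = rh := hopt hh' rfl
          rw [e1, e2] at hfl
          exact hdisj hWx hhu (hleF hWx hfl)
      obtain ⟨pp, qq, hppq⟩ := hrm
      rw [hmdec, List.append_assoc] at hppq
      rcases List.append_eq_append_iff.mp hppq with ⟨e, hu, h2⟩ | ⟨e, hpp2, h2⟩
      · cases e with
        | nil => exact hSin _ hrR _ hs1ss ⟨[], qq, by simpa using h2⟩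
        | cons h e' =>
          have hhh : rh = h := by simpa using congrArg List.head? h2
          exact hinu (by rw [hu, hhh]; simp)
      · exact hSin _ hrR _ hs1ss ⟨e, qq, by rw [h2]; simp⟩
  · -- case i = k, zero junction
    obtain ⟨hnJ, sk, hsk, v, zz, hWdec, hmdec⟩ := hcase
    have hsk' : ss.getLast? = some sk := Option.mem_def.mp hsk
    obtain ⟨ssin, hsseq⟩ := List.getLast?_eq_some_iff.mp hsk'
    have hskss : sk ∈ ss := by rw [hsseq]; simp
    have hpw1 : List.Pairwise (leS ws.flatten) (ssin ++ [sk]) := hsseq ▸ hpw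
    have hub : ∀ r ∈ ss, r = sk ∨ leS ws.flatten r sk := by
      intro r hr
      rw [hsseq] at hr
      rcases List.mem_append.mp hr with hr' | hr'
      · exact Or.inr ((List.pairwise_append.mp hpw1).2.2 _ hr' sk (by simp))
      · exact Or.inl (by simpa using hr')
    have hskR := (hsubR sk hskss).1
    obtain ⟨hZsk, hlensk, hPIsk⟩ := hZR sk hskR
    obtain ⟨y, skt, rfl⟩ : ∃ a l, sk = a :: l := by
      cases sk with
      | nil => exact absurd hlensk (by simp)
      | cons a l => exact ⟨a, l, rfl⟩
    have hWy : ws.flatten = zz ++ y :: (skt ++ v) := by rw [hWdec]; simp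
    have hsktne : skt ≠ [] := by rintro rfl; simp at hlensk
    have hmskv : m = skt ++ v := by rw [hmdec]; rfl
    have hsvW : (y :: skt) ++ v <:+ ws.flatten := ⟨zz, by rw [hWdec]; simp⟩
    have hmW : m <:+: ws.flatten := ⟨zz ++ [y], [], by rw [hWy, hmskv]; simp⟩
    have hPIm : PathIn s t N m := by
      refine ⟨⟨?_, ?_⟩, ?_⟩
      · rw [hmskv]; intro h; exact hsktne (List.append_eq_nil_iff.mp h).1
      · have hch := (hWch.suffix hsvW).tail
        rw [hmskv]
        exact hch
      · intro cc hcc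
        rw [hmskv] at hcc
        rcases List.mem_append.mp hcc with h | h
        · exact hPIsk.2 cc (List.mem_cons_of_mem _ h)
        · exact hWarr cc (by rw [hWy]; simp [h])
    intro hZm
    obtain ⟨r, hrR, hrm⟩ := (hRgen m hPIm).1 hZm
    have hZr := (hZR r hrR).1
    by_cases hjr : IsJuncRel ω N r
    · obtain ⟨a, haN, b, hbN, c, hcg, z, hzh, rfl⟩ := hjr
      exact hJW a c z haN (Option.mem_def.mp hcg) (hrm.trans hmW) hZr
    · have hrss : r ∈ ss := (hss_mem r).2 ⟨hrR, hjr⟩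
      obtain ⟨rh, rt, rfl⟩ : ∃ a l, r = a :: l := by
        cases r with
        | nil => exact absurd (hZR [] hrR).2.1 (by simp)
        | cons a l => exact ⟨a, l, rfl⟩
      obtain ⟨pp, qq, hppq⟩ := hrm
      rw [hmskv] at hppq
      have hWh : ws.flatten = (zz ++ y :: pp) ++ rh :: (rt ++ qq) := by
        rw [hWy, ← hppq]; simp
      have hyno : y ∉ skt ++ v := (honce hWy).2
      have hrhm : rh ∈ skt ++ v := by rw [← hppq]; simp
      rcases hub _ hrss with heq | hle
      · have hry : rh = y := by simpa using congrArg List.head? heq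
        exact hyno (hry ▸ hrhm)
      · obtain ⟨h', hh', y', hy', hfl⟩ := hle
        have e1 : h' = rh := hopt hh' rfl
        have e2 : y' = y := hopt hy' rfl
        rw [e1, e2] at hfl
        have hyin := hleF hWh hfl
        refine hyno ?_
        rcases List.mem_cons.mp hyin with heq2 | hin
        · rw [heq2]; exact hrhm
        · rw [← hppq]
          simp only [List.mem_append, List.mem_cons] at hin ⊢
          tauto
  · -- case i ∈ {0, k}, nonzero junction
    obtain ⟨hJok, s1, hs1, sk, hsk, u, v, zz, zz', x, hxh, y, hyh, hW1, hW2, hmdec⟩ := hcase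
    have hs1' : ss.head? = some s1 := Option.mem_def.mp hs1
    obtain ⟨sstl, hsseq1⟩ : ∃ tl, ss = s1 :: tl := by
      cases ss with
      | nil => simp at hs1'
      | cons a l => exact ⟨l, by rw [show a = s1 by simpa using hs1']⟩
    have hs1ss : s1 ∈ ss := by rw [hsseq1]; simp
    have hpw1 : List.Pairwise (leS ws.flatten) (s1 :: sstl) := hsseq1 ▸ hpw
    have hlb : ∀ r ∈ ss, r = s1 ∨ leS ws.flatten s1 r := by
      intro r hr
      rw [hsseq1] at hr
      rcases List.mem_cons.mp hr with rfl | hr'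
      · exact Or.inl rfl
      · exact Or.inr (List.rel_of_pairwise_cons hpw1 hr')
    have hsk' : ss.getLast? = some sk := Option.mem_def.mp hsk
    obtain ⟨ssin, hsseq2⟩ := List.getLast?_eq_some_iff.mp hsk'
    have hskss : sk ∈ ss := by rw [hsseq2]; simp
    have hpw2 : List.Pairwise (leS ws.flatten) (ssin ++ [sk]) := hsseq2 ▸ hpw
    have hub : ∀ r ∈ ss, r = sk ∨ leS ws.flatten r sk := by
      intro r hr
      rw [hsseq2] at hr
      rcases List.mem_append.mp hr with hr' | hr'
      · exact Or.inr ((List.pairwise_append.mp hpw2).2.2 _ hr' sk (by simp))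
      · exact Or.inl (by simpa using hr')
    have hs1R := (hsubR s1 hs1ss).1
    obtain ⟨hZs1, hlens1, hPIs1⟩ := hZR s1 hs1R
    have hxh' : s1.head? = some x := Option.mem_def.mp hxh
    have hyh' : sk.head? = some y := Option.mem_def.mp hyh
    have hdhead : s1.dropLast.head? = some x := by
      rw [aux_head?_dropLast hlens1]; exact hxh'
    have hdne : s1.dropLast ≠ [] := by intro h; rw [h] at hdhead; simp at hdhead
    have hW1x : ws.flatten = u ++ x :: zz := by rw [hW1]; simp
    have hW2y : ws.flatten = zz' ++ y :: v := by rw [hW2]; simp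
    have hm' : m = v ++ (u ++ s1.dropLast) := by rw [hmdec]; simp
    have huW : u <:+: ws.flatten := ⟨[], x :: zz, by rw [hW1x]; simp⟩
    have hvW : v <:+: ws.flatten := ⟨zz' ++ [y], [], by rw [hW2]; simp⟩
    have hvWs : v <:+ ws.flatten := ⟨zz' ++ [y], by rw [hW2]⟩
    have hchux : List.Chain' (fun a b => t a = s b) (u ++ [x]) :=
      hWch.prefix ⟨zz, by rw [hW1]⟩
    have hheadud : (u ++ s1.dropLast).head? = ws.flatten.head? := by
      cases u with
      | nil => rw [hW1x]; simpa using hdhead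
      | cons u0 ut => rw [hW1x]; simp
    obtain ⟨jx, hjx, jy, hjy, hjts, hjnz⟩ := hJok
    have hPIm : PathIn s t N m := by
      refine ⟨⟨?_, ?_⟩, ?_⟩
      · rw [hm']; intro h
        exact hdne (List.append_eq_nil_iff.mp (List.append_eq_nil_iff.mp h).2).2
      · rw [hm']
        unfold List.Chain'
        rw [List.isChain_append]
        refine ⟨hWch.suffix hvWs, ?_, ?_⟩
        · rw [List.isChain_append]
          refine ⟨hWch.infix huW, hPIs1.1.2.prefix (List.dropLast_prefix _), ?_⟩
          intro cc hcc zz2 hzz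
          have hzz2 : zz2 = x := hopt hzz hdhead
          rw [hzz2]
          exact (List.isChain_append.mp hchux).2.2 cc hcc x rfl
        · intro cc hcc zz2 hzz
          have hvne : v ≠ [] := by rintro rfl; simp at hcc
          obtain ⟨vi, hvi⟩ := List.getLast?_eq_some_iff.mp (Option.mem_def.mp hcc)
          have hWl : ws.flatten.getLast? = some cc := by
            rw [hW2, hvi,
              show zz' ++ [y] ++ (vi ++ [cc]) = (zz' ++ [y] ++ vi) ++ [cc] by simp]
            exact List.getLast?_concat
          have hjx2 : jx = cc := hopt hjx hWl
          have hjy2 : jy = zz2 := hopt hjy (by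
            rw [← hheadud]; exact Option.mem_def.mp hzz)
          rw [← hjx2, ← hjy2]
          exact hjts
      · intro cc hcc
        rw [hm'] at hcc
        rcases List.mem_append.mp hcc with h | h
        · exact hWarr cc (hvW.subset h)
        · rcases List.mem_append.mp h with h' | h'
          · exact hWarr cc (huW.subset h')
          · exact hPIs1.2 cc (List.dropLast_subset _ h')
    intro hZm
    obtain ⟨r, hrR, hrm⟩ := (hRgen m hPIm).1 hZm
    have hZr := (hZR r hrR).1
    by_cases hjr : IsJuncRel ω N r
    · obtain ⟨a, haN, b, hbN, c, hcg, z, hzh, rfl⟩ := hjr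
      have hcg' : (ω a).getLast? = some c := Option.mem_def.mp hcg
      rw [hm'] at hrm
      rcases aux_pair_split hrm with h | h | ⟨h1, h2⟩
      · exact hJW a c z haN hcg' (h.trans hvW) hZr
      · rcases aux_pair_split h with h' | h' | ⟨h1', h2'⟩
        · exact hJW a c z haN hcg' (h'.trans huW) hZr
        · exact hQS _ hs1ss c z h' hZr
        · have hzx : z = x := by
            rw [hdhead] at h2'; exact (Option.some_inj.mp h2').symm
          subst hzx
          obtain ⟨ui, hui⟩ := List.getLast?_eq_some_iff.mp h1'
          exact hJW a c z haN hcg' ⟨ui, zz, by rw [hW1x, hui]; simp⟩ hZr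
      · have hvne : v ≠ [] := by intro he; rw [he] at h1; simp at h1
        obtain ⟨vi, hvi⟩ := List.getLast?_eq_some_iff.mp h1
        have hWl : ws.flatten.getLast? = some c := by
          rw [hW2, hvi,
            show zz' ++ [y] ++ (vi ++ [c]) = (zz' ++ [y] ++ vi) ++ [c] by simp]
          exact List.getLast?_concat
        have hjx2 : jx = c := hopt hjx hWl
        have hjy2 : jy = z := hopt hjy (by rw [← hheadud]; exact h2)
        rw [hjx2, hjy2] at hjnz
        exact hjnz hZr
    · have hrss : r ∈ ss := (hss_mem r).2 ⟨hrR, hjr⟩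
      obtain ⟨rh, rt, rfl⟩ : ∃ a l, r = a :: l := by
        cases r with
        | nil => exact absurd (hZR [] hrR).2.1 (by simp)
        | cons a l => exact ⟨a, l, rfl⟩
      have hinu : rh ∈ u → False := by
        intro hhu
        rcases hlb _ hrss with heq | hle
        · have hx2 : rh = x := by
            have h3 := congrArg List.head? heq
            rw [hxh'] at h3
            simpa using h3
          exact (honce hW1x).1 (hx2 ▸ hhu)
        · obtain ⟨x', hx', h', hh', hfl⟩ := hle
          have e1 : x' = x := hopt hx' hxh'
          have e2 : h' = rh := hopt hh' rfl
          rw [e1, e2] at hfl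
          exact hdisj hW1x hhu (hleF hW1x hfl)
      have hinv : rh ∈ v → False := by
        intro hhv
        have hyno : y ∉ v := (honce hW2y).2
        rcases hub _ hrss with heq | hle
        · have hry : rh = y := by
            have h3 := congrArg List.head? heq
            rw [hyh'] at h3
            simpa using h3
          exact hyno (hry ▸ hhv)
        · obtain ⟨h', hh', y', hy', hfl⟩ := hle
          have e1 : h' = rh := hopt hh' rfl
          have e2 : y' = y := hopt hy' hyh'
          rw [e1, e2] at hfl
          obtain ⟨p1, p2, hp12⟩ := List.append_of_mem hhv
          have hWh : ws.flatten = (zz' ++ y :: p1) ++ rh :: p2 := by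
            rw [hW2y, hp12]; simp
          have hyin := hleF hWh hfl
          refine hyno ?_
          rcases List.mem_cons.mp hyin with heq2 | hin
          · rw [heq2]; exact hhv
          · rw [hp12]; simp [hin]
      obtain ⟨pp, qq, hppq⟩ := hrm
      rw [hm', List.append_assoc] at hppq
      rcases List.append_eq_append_iff.mp hppq with ⟨e, hv, h2⟩ | ⟨e, hpp2, h2⟩
      · cases e with
        | cons h e' =>
          have hhh : rh = h := by simpa using congrArg List.head? h2
          exact hinv (by rw [hv, hhh]; simp)
        | nil =>
          simp only [List.append_nil] at hv
          simp only [List.nil_append] at h2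
          cases u with
          | nil =>
            exact hSin _ hrR _ hs1ss ⟨[], qq, by simpa using h2⟩
          | cons u0 ut =>
            have hhh : rh = u0 := by simpa using congrArg List.head? h2
            exact hinu (by rw [hhh]; simp)
      · rcases List.append_eq_append_iff.mp h2.symm with ⟨f, hu2, h3⟩ | ⟨f, he2, h3⟩
        · cases f with
          | nil => exact hSin _ hrR _ hs1ss ⟨[], qq, by simpa using h3⟩
          | cons f0 ft =>
            have hhh : rh = f0 := by simpa using congrArg List.head? h3
            exact hinu (by rw [hu2, hhh]; simp)
        · exact hSin _ hrR _ hs1ss ⟨f, qq, by rw [h3]; simp⟩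

end UMPPaper
end

section
/- Let A = kQ/I be a special multiserial and locally monomial algebra and N a weakly connected component of G_{Q,I}. If S_N consists of a single relation s_1 of length greater than two (σ_1 > 1), then A_N is a UMP algebra if and only if the junction path (last arrow of ω_n)·(first arrow of ω_0) is not in I_N. -/
namespace UMPPaper

variable {V A : Type}

section Helpers
variable {α : Type}

theorem getElem_idx_congr {l : List α} {i j : ℕ} (h : i = j) (hi : i < l.length) :
    l[i] = l[j]'(h ▸ hi) := by subst h; rfl

theorem eq_getElem_of_getLast? {l : List α} {x : α} (hne : l ≠ []) (hx : x ∈ l.getLast?) :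
    ∃ h : l.length - 1 < l.length, x = l[l.length - 1] := by
  rw [List.getLast?_eq_getLast hne] at hx
  refine ⟨by have := List.length_pos_iff.mpr hne; omega, ?_⟩
  have : x = l.getLast hne := by simpa using hx.symm
  rw [this, List.getLast_eq_getElem]

theorem eq_getElem_of_head? {l : List α} {x : α} (hne : l ≠ []) (hx : x ∈ l.head?) :
    ∃ h : 0 < l.length, x = l[0] := by
  rw [List.head?_eq_head hne] at hx
  refine ⟨List.length_pos_iff.mpr hne, ?_⟩
  have : x = l.head hne := by simpa using hx.symm
  rw [this, List.head_eq_getElem]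

theorem getElem_mem_getLast? {l : List α} (hne : l ≠ []) (h : l.length - 1 < l.length) :
    l[l.length - 1] ∈ l.getLast? := by
  rw [List.getLast?_eq_getLast hne]
  simp [List.getLast_eq_getElem]

theorem getElem_mem_head? {l : List α} (hne : l ≠ []) (h : 0 < l.length) :
    l[0] ∈ l.head? := by
  rw [List.head?_eq_head hne]
  simp [List.head_eq_getElem]

theorem chain'_getElem {R : α → α → Prop} {l : List α} :
    l.Chain' R ↔ ∀ i (h : i + 1 < l.length), R l[i] l[i+1] := by
  refine Iff.trans List.isChain_iff_getElem ?_
  constructor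
  · intro h i hi; simpa using h i (by omega)
  · intro h i hi; simpa using h i (by omega)



theorem pair_infix {l : List α} {i : ℕ} (h : i + 1 < l.length) :
    [l[i], l[i+1]] <:+: l := by
  refine ⟨l.take i, l.drop (i+2), ?_⟩
  have h1 : l.drop i = l[i] :: l.drop (i+1) := List.drop_eq_getElem_cons (by omega)
  have h2 : l.drop (i+1) = l[i+1] :: l.drop (i+2) := List.drop_eq_getElem_cons (by omega)
  calc l.take i ++ [l[i], l[i+1]] ++ l.drop (i+2)
      = l.take i ++ l.drop i := by rw [h1, h2]; simp
    _ = l := List.take_append_drop i l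

theorem infix_pair {x y : α} {l : List α} (h : [x, y] <:+: l) :
    ∃ i, ∃ hi : i + 1 < l.length, l[i] = x ∧ l[i+1] = y := by
  obtain ⟨u, v, huv⟩ := h
  subst huv
  refine ⟨u.length, by simp +arith, ?_, ?_⟩
  · simp [List.getElem_append]
  · simp [List.getElem_append]

theorem infix_getElems {u l : List α} (h : u <:+: l) :
    ∃ k, k + u.length ≤ l.length ∧
      ∀ j (hj : j < u.length) (hjl : k + j < l.length), u[j] = l[k+j] := by
  obtain ⟨w, v, hwv⟩ := h
  refine ⟨w.length, by rw [← hwv]; simp, ?_⟩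
  intro j hj hjl
  subst hwv
  simp [List.getElem_append, hj]

theorem infix_concat {r l : List α} {c : α} (h : r <:+: l ++ [c]) :
    r <:+: l ∨ r <:+ l ++ [c] := by
  obtain ⟨u, v, huv⟩ := h
  rcases List.eq_nil_or_concat v with rfl | ⟨v', e, rfl⟩
  · right; exact ⟨u, by simpa using huv⟩
  · left
    have : (u ++ r ++ v') ++ [e] = l ++ [c] := by simpa using huv
    have h2 := List.append_inj' this (by simp)
    exact ⟨u, v', h2.1⟩

theorem suffix_pair_concat {x y c : α} {l : List α} (h : [x, y] <:+ l ++ [c]) :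
    y = c ∧ ∃ w, l = w ++ [x] := by
  obtain ⟨w, hw⟩ := h
  have : (w ++ [x]) ++ [y] = l ++ [c] := by simpa using hw
  have h2 := List.append_inj' this (by simp)
  refine ⟨by simpa using h2.2, w, h2.1.symm⟩

theorem prefix_pair_cons {x y d : α} {m : List α} (h : [x, y] <+: d :: m) :
    x = d ∧ ∃ h0 : 0 < m.length, y = m[0] := by
  obtain ⟨v, hv⟩ := h
  simp only [List.cons_append, List.nil_append, List.cons.injEq] at hv
  obtain ⟨rfl, hv2⟩ := hv
  subst hv2
  exact ⟨rfl, by simp, by simp⟩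

theorem not_nodup_decomp {l : List α} (h : ¬ l.Nodup) :
    ∃ u x v w, l = u ++ x :: v ++ x :: w := by
  induction l with
  | nil => simp at h
  | cons a tl ih =>
    by_cases ha : a ∈ tl
    · obtain ⟨p, q, rfl⟩ := List.append_of_mem ha
      exact ⟨[], a, p, q, by simp⟩
    · have : ¬ tl.Nodup := fun hn => h (List.nodup_cons.mpr ⟨ha, hn⟩)
      obtain ⟨u, x, v, w, rfl⟩ := ih this
      exact ⟨a :: u, x, v, w, by simp⟩

theorem mem_infix_singleton {a : α} {l : List α} (h : a ∈ l) : [a] <:+: l := by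
  obtain ⟨u, v, rfl⟩ := List.append_of_mem h
  exact ⟨u, v, by simp⟩

end Helpers

section Helpers2
variable {α : Type}

variable {α : Type}

theorem mem_dropLast_mid {l u rest : List α} {x d : α} (he : l = u ++ x :: d :: rest) :
    x ∈ l.dropLast := by
  subst he
  rw [List.dropLast_append_cons]
  simp [List.dropLast_cons₂]

theorem getLast_not_mem_dropLast {l : List α} (h : l.Nodup) (hne : l ≠ []) :
    l.getLast hne ∉ l.dropLast := by
  intro hmem
  have e := List.dropLast_append_getLast hne
  rw [← e] at h
  rcases List.nodup_append'.mp h with ⟨_, _, hdisj⟩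
  exact hdisj hmem (by simp)

theorem chain'_mid {R : α → α → Prop} {l u rest : List α} {c d : α}
    (h : l.Chain' R) (he : l = u ++ c :: d :: rest) : R c d := by
  subst he
  exact (List.isChain_cons_cons.mp (List.isChain_append.mp h).2.1).1

theorem junc_head {R : α → α → Prop} {l₁ l₂ l₂' : List α} (h2 : l₂.head? = l₂'.head?)
    (h : ∀ e ∈ l₁.getLast?, ∀ y ∈ l₂.head?, R e y) :
    ∀ e ∈ l₁.getLast?, ∀ y ∈ l₂'.head?, R e y := by
  intro e he y hy; exact h e he y (h2 ▸ hy)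

end Helpers2

section Abstract
variable {s t : A → V} {Zi : List A → Prop} {N : Set A} {W : List A}

structure WFacts (s t : A → V) (Zi : List A → Prop) (N : Set A) (W : List A) : Prop where
  ne : W ≠ []
  chain : W.Chain' (fun x y => t x = s y)
  nodup : W.Nodup
  memN : ∀ a ∈ W, a ∈ N
  Nmem : ∀ a ∈ N, a ∈ W
  nz : W.Chain' (fun x y => ¬ Zi [x, y])

theorem lsucc (hsm : SpecialMultiserial s t Zi) (F : WFacts s t Zi N W)
    (hJn : ¬ JunctionOK s t Zi W W) {k : ℕ} (hk : k < W.length) {b : A}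
    (hts : t (W[k]) = s b) (hnz : ¬ Zi [W[k], b]) (hb : b ∈ N) :
    ∃ hk1 : k + 1 < W.length, b = W[k+1] := by
  by_cases hk1 : k + 1 < W.length
  · exact ⟨hk1, (hsm (W[k]) b (W[k+1])).1 ⟨hts, hnz⟩
      ⟨chain'_getElem.mp F.chain k hk1, chain'_getElem.mp F.nz k hk1⟩⟩
  · exfalso
    obtain ⟨l, hl, hbl⟩ := List.mem_iff_getElem.mp (F.Nmem b hb)
    rcases Nat.eq_zero_or_pos l with rfl | hlpos
    · apply hJn
      refine ⟨W[k], ?_, b, ?_, hts, hnz⟩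
      · have := getElem_mem_getLast? F.ne (by omega)
        rwa [getElem_idx_congr (show W.length - 1 = k by omega)] at this
      · rw [← hbl]; exact getElem_mem_head? F.ne (by omega)
    · have hl1 : (l - 1) + 1 < W.length := by omega
      have hc1 := chain'_getElem.mp F.chain (l-1) hl1
      have hc2 := chain'_getElem.mp F.nz (l-1) hl1
      rw [getElem_idx_congr (show l - 1 + 1 = l by omega), hbl] at hc1 hc2
      have heq : W[k] = W[l-1] := (hsm b (W[k]) (W[l-1])).2 ⟨hts, hnz⟩ ⟨hc1, hc2⟩
      have := (F.nodup.getElem_inj_iff).mp heq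
      omega

theorem csucc (hsm : SpecialMultiserial s t Zi) (F : WFacts s t Zi N W)
    (hJ : JunctionOK s t Zi W W) {k : ℕ} (hk : k < W.length) {b : A}
    (hts : t (W[k]) = s b) (hnz : ¬ Zi [W[k], b]) :
    b = W[(k+1) % W.length]'(Nat.mod_lt _ (by omega)) := by
  by_cases hk1 : k + 1 < W.length
  · rw [getElem_idx_congr (Nat.mod_eq_of_lt hk1)]
    exact (hsm (W[k]) b (W[k+1])).1 ⟨hts, hnz⟩
      ⟨chain'_getElem.mp F.chain k hk1, chain'_getElem.mp F.nz k hk1⟩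
  · obtain ⟨x, hx, y, hy, hts0, hnz0⟩ := hJ
    obtain ⟨h1, hxe⟩ := eq_getElem_of_getLast? F.ne hx
    obtain ⟨h2, hye⟩ := eq_getElem_of_head? F.ne hy
    have hxk : x = W[k] := by
      rw [hxe]; exact getElem_idx_congr (show W.length - 1 = k by omega) h1
    subst hxk
    have hby : b = y := (hsm (W[k]) b y).1 ⟨hts, hnz⟩ ⟨hts0, hnz0⟩
    rw [hby, hye]
    exact getElem_idx_congr (show (0:ℕ) = (k+1) % W.length by
      rw [show k + 1 = W.length by omega]; simp) h2

theorem lalign (hsm : SpecialMultiserial s t Zi) (F : WFacts s t Zi N W)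
    (hJn : ¬ JunctionOK s t Zi W W) {p : List A}
    (hpc : p.Chain' (fun a b => t a = s b))
    (hnz : p.Chain' (fun a b => ¬ Zi [a, b]))
    (hmem : ∀ x ∈ p, x ∈ N)
    {i : ℕ} (hp0 : 0 < p.length) (hi : i < W.length) (h0 : p[0] = W[i]) :
    ∀ j (hj : j < p.length), ∃ hij : i + j < W.length, p[j] = W[i+j] := by
  intro j
  induction j with
  | zero => intro hj; exact ⟨by omega, by rw [h0]; exact getElem_idx_congr (by omega) hi⟩
  | succ j ih =>
    intro hj
    obtain ⟨hij, hpj⟩ := ih (by omega)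
    have hts : t (W[i+j]) = s (p[j+1]) := by rw [← hpj]; exact chain'_getElem.mp hpc j hj
    have hnzz : ¬ Zi [W[i+j], p[j+1]] := by rw [← hpj]; exact chain'_getElem.mp hnz j hj
    obtain ⟨h1, h2⟩ := lsucc hsm F hJn hij hts hnzz (hmem _ (List.getElem_mem hj))
    exact ⟨by omega, h2⟩

theorem calign (hsm : SpecialMultiserial s t Zi) (F : WFacts s t Zi N W)
    (hJ : JunctionOK s t Zi W W) {p : List A}
    (hpc : p.Chain' (fun a b => t a = s b))
    (hnz : p.Chain' (fun a b => ¬ Zi [a, b]))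
    {i : ℕ} (hp0 : 0 < p.length) (hi : i < W.length) (h0 : p[0] = W[i]) :
    ∀ j (hj : j < p.length), ∃ hij : (i + j) % W.length < W.length,
      p[j] = W[(i+j) % W.length] := by
  have hn : 0 < W.length := by omega
  intro j
  induction j with
  | zero =>
    intro hj
    exact ⟨Nat.mod_lt _ hn, by
      rw [h0]; exact getElem_idx_congr (by simpa using (Nat.mod_eq_of_lt hi).symm) hi⟩
  | succ j ih =>
    intro hj
    obtain ⟨hij, hpj⟩ := ih (by omega)
    have hts : t (W[(i+j) % W.length]) = s (p[j+1]) := by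
      rw [← hpj]; exact chain'_getElem.mp hpc j hj
    have hnzz : ¬ Zi [W[(i+j) % W.length], p[j+1]] := by
      rw [← hpj]; exact chain'_getElem.mp hnz j hj
    have h2 := csucc hsm F hJ hij hts hnzz
    refine ⟨Nat.mod_lt _ hn, ?_⟩
    rw [h2]
    exact getElem_idx_congr (by rw [Nat.mod_add_mod, ← Nat.add_assoc]) _

theorem dir_forward (hZ : ZeroClosed Zi) (hsm : SpecialMultiserial s t Zi)
    (F : WFacts s t Zi N W) {R : Set (List A)} {s1 : List A}
    (hRmin : ∀ p, PathIn s t N p → (Zi p ↔ ∃ r ∈ R, r <:+: p))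
    (hshape : ∀ r ∈ R, r = s1 ∨ ∃ x y, r = [x, y])
    (hZR : ∀ r ∈ R, Zi r)
    (hs1zi : Zi s1) (hs1path : IsPath s t s1) (hs1N : ∀ x ∈ s1, x ∈ N)
    (hs1nz : s1.Chain' (fun a b => ¬ Zi [a, b]))
    (hlen : 3 ≤ s1.length)
    (hJn : ¬ JunctionOK s t Zi W W) : ¬ UMPin s t Zi N := by
  intro hU
  obtain ⟨σ, hσ⟩ : ∃ σ, s1.length = σ + 1 := ⟨s1.length - 1, by omega⟩
  have hσ2 : 2 ≤ σ := by omega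
  have hs1ne : s1 ≠ [] := hs1path.1
  have hs10 : 0 < s1.length := List.length_pos_iff.mpr hs1ne
  obtain ⟨i0, hi0, hx0⟩ := List.mem_iff_getElem.mp (F.Nmem _ (hs1N _ (List.getElem_mem hs10)))
  -- hx0 : W[i0] = s1[0]
  have hal := lalign hsm F hJn hs1path.2 hs1nz hs1N hs10 hi0 hx0.symm
  have hbound : i0 + σ + 1 ≤ W.length := by
    obtain ⟨h, _⟩ := hal σ (by omega); omega
  have hWs1 : ∀ j (hj : j < s1.length) (hjW : i0 + j < W.length), s1[j] = W[i0 + j] :=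
    fun j hj hjW => (hal j hj).2
  set m1 := W.take (i0 + σ) with hm1def
  set m2 := W.drop (i0 + 1) with hm2def
  have hm1len : m1.length = i0 + σ := by
    rw [hm1def, List.length_take]; omega
  have hm2len : m2.length = W.length - (i0 + 1) := by
    rw [hm2def, List.length_drop]
  have hm1ne : m1 ≠ [] := List.length_pos_iff.mp (by omega)
  have hm2ne : m2 ≠ [] := List.length_pos_iff.mp (by omega)
  have hm1get : ∀ j (hj : j < m1.length) (hjW : j < W.length), m1[j] = W[j] := by
    intro j hj hjW; exact List.getElem_take
  have hm2get : ∀ j (hj : j < m2.length) (hjW : i0 + 1 + j < W.length), m2[j] = W[i0+1+j] := by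
    intro j hj hjW; exact List.getElem_drop
  have hm1inf : m1 <:+: W := (List.take_prefix _ _).isInfix
  have hm2inf : m2 <:+: W := (List.drop_suffix _ _).isInfix
  have keyNZ : ∀ p : List A, p ≠ [] → p <:+: W → ¬ s1 <:+: p → ¬ Zi p := by
    intro p hpne hpW hnoocc hzi
    obtain ⟨r, hrR, hrp⟩ := (hRmin p ⟨⟨hpne, F.chain.infix hpW⟩,
      fun x hx => F.memN x (hpW.subset hx)⟩).mp hzi
    rcases hshape r hrR with rfl | ⟨x, y, rfl⟩
    · exact hnoocc hrp
    · obtain ⟨i, hi, hx, hy⟩ := infix_pair (hrp.trans hpW)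
      exact (chain'_getElem.mp F.nz i hi) (by rw [hx, hy]; exact hZR _ hrR)
  have hpath1 : PathIn s t N m1 :=
    ⟨⟨hm1ne, F.chain.infix hm1inf⟩, fun x hx => F.memN x (hm1inf.subset hx)⟩
  have hpath2 : PathIn s t N m2 :=
    ⟨⟨hm2ne, F.chain.infix hm2inf⟩, fun x hx => F.memN x (hm2inf.subset hx)⟩
  have hnocc1 : ¬ s1 <:+: m1 := by
    intro hocc
    obtain ⟨k, hk, hkget⟩ := infix_getElems hocc
    have hkm : k < m1.length := by omega
    have h0 : s1[0] = m1[k] := hkget 0 hs10 (by omega)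
    have hkW : k < W.length := by omega
    have : W[i0] = W[k] := by rw [hx0, h0]; exact hm1get k hkm hkW
    have := F.nodup.getElem_inj_iff.mp this
    omega
  have hnocc2 : ¬ s1 <:+: m2 := by
    intro hocc
    obtain ⟨k, hk, hkget⟩ := infix_getElems hocc
    have hkm : k < m2.length := by omega
    have h0 : s1[0] = m2[k] := hkget 0 hs10 (by omega)
    have hkW : i0 + 1 + k < W.length := by omega
    have : W[i0] = W[i0+1+k] := by rw [hx0, h0]; exact hm2get k hkm hkW
    have := F.nodup.getElem_inj_iff.mp this
    omega
  have hmax1 : MaxPathIn s t Zi N m1 := by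
    refine ⟨hpath1, keyNZ m1 hm1ne hm1inf hnocc1, ?_, ?_⟩
    · rintro α hα ⟨x, hx, hts⟩
      obtain ⟨hlt, hxe⟩ := eq_getElem_of_getLast? hm1ne hx
      have hxW : x = W[i0 + σ - 1]'(by omega) := by
        rw [hxe, hm1get _ hlt (by omega)]
        exact getElem_idx_congr (by omega) (by omega)
      by_cases hzz : Zi [x, α]
      · refine hZ _ _ hzz ⟨m1.dropLast, [], ?_⟩
        have : m1.dropLast ++ [x] = m1 := by
          conv_rhs => rw [← List.dropLast_append_getLast hm1ne]
          congr 1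
          rw [List.getLast_eq_getElem, ← hxe]
        simp only [List.append_nil]
        rw [show m1.dropLast ++ [x, α] = (m1.dropLast ++ [x]) ++ [α] by simp, this]
      · have hts' : t (W[i0+σ-1]'(by omega)) = s α := by rw [← hxW]; exact hts
        have hnz' : ¬ Zi [W[i0+σ-1]'(by omega), α] := by rw [← hxW]; exact hzz
        obtain ⟨h1, h2⟩ := lsucc hsm F hJn (by omega) hts' hnz' hα
        -- h2 : α = W[i0+σ-1+1]
        have hαW : α = W[i0+σ]'(by omega) := by
          rw [h2]; exact getElem_idx_congr (by omega) h1
        refine hZ s1 _ hs1zi ?_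
        have heq : (m1 ++ [α]).drop i0 = s1 := by
          apply List.ext_getElem
          · simp [hm1len, hσ]; omega
          · intro j h1' h2'
            rw [List.getElem_drop]
            rw [List.getElem_append]
            split
            · rename_i hcase
              rw [hm1get _ hcase (by omega), hWs1 j (by omega) (by omega)]
            · rename_i hcase
              rw [hm1len] at hcase
              rw [hσ] at h2'
              have hjσ : j = σ := by omega
              rw [List.getElem_singleton]
              have e1 : s1[j]'(by omega) = W[i0+j]'(by omega) := hWs1 j (by omega) (by omega)
              rw [e1, hαW]
              exact getElem_idx_congr (by omega) (by omega)
        rw [← heq]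
        exact (List.drop_suffix _ _).isInfix
    · rintro α hα ⟨x, hx, hts⟩
      obtain ⟨h0lt, hxe⟩ := eq_getElem_of_head? hm1ne hx
      have hxW : x = W[0]'(by omega) := by rw [hxe, hm1get 0 h0lt (by omega)]
      by_cases hzz : Zi [α, x]
      · refine hZ _ _ hzz ⟨[], m1.tail, ?_⟩
        have : m1 = x :: m1.tail := by
          conv_lhs => rw [← List.cons_head_tail hm1ne]
          congr 1
          rw [List.head_eq_getElem]
          exact hxe.symm
        simp only [List.nil_append]
        rw [show [α, x] ++ m1.tail = α :: (x :: m1.tail) by simp, ← this]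
      · exfalso
        obtain ⟨l, hlW, hαl⟩ := List.mem_iff_getElem.mp (F.Nmem α hα)
        have hts' : t (W[l]) = s (W[0]'(by omega)) := by rw [hαl, ← hxW]; exact hts
        have hnz' : ¬ Zi [W[l], W[0]'(by omega)] := by rw [hαl, ← hxW]; exact hzz
        obtain ⟨hl1, hl2⟩ := lsucc hsm F hJn hlW hts' hnz' (F.memN _ (List.getElem_mem (by omega)))
        have := F.nodup.getElem_inj_iff.mp hl2
        omega
  have hmax2 : MaxPathIn s t Zi N m2 := by
    refine ⟨hpath2, keyNZ m2 hm2ne hm2inf hnocc2, ?_, ?_⟩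
    · rintro α hα ⟨x, hx, hts⟩
      obtain ⟨hlt, hxe⟩ := eq_getElem_of_getLast? hm2ne hx
      have hxW : x = W[W.length - 1]'(by omega) := by
        rw [hxe, hm2get _ hlt (by omega)]
        exact getElem_idx_congr (by omega) (by omega)
      by_cases hzz : Zi [x, α]
      · refine hZ _ _ hzz ⟨m2.dropLast, [], ?_⟩
        have : m2.dropLast ++ [x] = m2 := by
          conv_rhs => rw [← List.dropLast_append_getLast hm2ne]
          congr 1
          rw [List.getLast_eq_getElem, ← hxe]
        simp only [List.append_nil]
        rw [show m2.dropLast ++ [x, α] = (m2.dropLast ++ [x]) ++ [α] by simp, this]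
      · exfalso
        have hts' : t (W[W.length-1]'(by omega)) = s α := by rw [← hxW]; exact hts
        have hnz' : ¬ Zi [W[W.length-1]'(by omega), α] := by rw [← hxW]; exact hzz
        obtain ⟨h1, h2⟩ := lsucc hsm F hJn (by omega) hts' hnz' hα
        omega
    · rintro α hα ⟨x, hx, hts⟩
      obtain ⟨h0lt, hxe⟩ := eq_getElem_of_head? hm2ne hx
      have hxW : x = W[i0+1]'(by omega) := by
        rw [hxe, hm2get 0 h0lt (by omega)]
      by_cases hzz : Zi [α, x]
      · refine hZ _ _ hzz ⟨[], m2.tail, ?_⟩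
        have : m2 = x :: m2.tail := by
          conv_lhs => rw [← List.cons_head_tail hm2ne]
          congr 1
          rw [List.head_eq_getElem]
          exact hxe.symm
        simp only [List.nil_append]
        rw [show [α, x] ++ m2.tail = α :: (x :: m2.tail) by simp, ← this]
      · obtain ⟨l, hlW, hαl⟩ := List.mem_iff_getElem.mp (F.Nmem α hα)
        have hts' : t (W[l]) = s (W[i0+1]'(by omega)) := by rw [hαl, ← hxW]; exact hts
        have hnz' : ¬ Zi [W[l], W[i0+1]'(by omega)] := by rw [hαl, ← hxW]; exact hzz
        obtain ⟨hl1, hl2⟩ := lsucc hsm F hJn hlW hts' hnz'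
          (F.memN _ (List.getElem_mem (by omega)))
        have hli : i0 + 1 = l + 1 := F.nodup.getElem_inj_iff.mp hl2
        have hαi0 : W[i0] = α := by
          rw [← hαl]; exact getElem_idx_congr (by omega) hi0
        refine hZ s1 _ hs1zi ?_
        have hdrop : α :: m2 = W.drop i0 := by
          rw [hm2def, ← hαi0]
          exact (List.drop_eq_getElem_cons hi0).symm
        rw [hdrop]
        have hpre : s1 = (W.drop i0).take s1.length := by
          apply List.ext_getElem
          · rw [List.length_take, List.length_drop]; omega
          · intro j hj1 hj2
            rw [List.getElem_take, List.getElem_drop, hWs1 j hj1 (by omega)]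
        rw [hpre]
        exact (List.take_prefix _ _).isInfix
  -- the two maximal paths share W[i0+1] but differ
  have hmem1 : W[i0+1]'(by omega) ∈ m1 := by
    rw [← hm1get (i0+1) (by omega) (by omega)]
    exact List.getElem_mem _
  have hmem2 : W[i0+1]'(by omega) ∈ m2 := by
    rw [← hm2get 0 (by omega) (by omega)]
    · exact List.getElem_mem _
  have heq := hU m1 m2 hmax1 hmax2 ⟨W[i0+1]'(by omega), hmem1, hmem2⟩
  have g1 : m1[0]'(by omega) = W[0]'(by omega) := hm1get 0 (by omega) (by omega)
  have g2 : m2[0]'(by omega) = W[i0+1]'(by omega) := hm2get 0 (by omega) (by omega)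
  have h00 : W[0]'(by omega) = W[i0+1]'(by omega) :=
    g1.symm.trans ((List.getElem_of_eq heq (by omega)).trans g2)
  have := F.nodup.getElem_inj_iff.mp h00
  omega

theorem dir_backward (hZ : ZeroClosed Zi) (hsm : SpecialMultiserial s t Zi)
    (F : WFacts s t Zi N W) {R : Set (List A)} {s1 : List A}
    (hRmin : ∀ p, PathIn s t N p → (Zi p ↔ ∃ r ∈ R, r <:+: p))
    (hshape : ∀ r ∈ R, r = s1 ∨ ∃ x y, r = [x, y])
    (hZR : ∀ r ∈ R, Zi r)
    (hs1zi : Zi s1) (hs1path : IsPath s t s1) (hs1N : ∀ x ∈ s1, x ∈ N)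
    (hs1nz : s1.Chain' (fun a b => ¬ Zi [a, b]))
    (hlen : 3 ≤ s1.length)
    (hJ : JunctionOK s t Zi W W) : UMPin s t Zi N := by
  have hn : 0 < W.length := List.length_pos_iff.mpr F.ne
  set n := W.length with hndef
  obtain ⟨σ, hσ⟩ : ∃ σ, s1.length = σ + 1 := ⟨s1.length - 1, by omega⟩
  have hσ2 : 2 ≤ σ := by omega
  have hs1ne : s1 ≠ [] := hs1path.1
  have hs10 : 0 < s1.length := List.length_pos_iff.mpr hs1ne
  set w : ℕ → A := fun k => W[k % n]'(Nat.mod_lt _ hn) with hwdef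
  have hw_congr : ∀ {k k' : ℕ}, k % n = k' % n → w k = w k' := by
    intro k k' h
    simp only [hwdef]
    exact getElem_idx_congr h (Nat.mod_lt _ hn)
  have hwmem : ∀ k, w k ∈ W := fun k => List.getElem_mem _
  have hwN : ∀ k, w k ∈ N := fun k => F.memN _ (hwmem k)
  have hwinj : ∀ k k', w k = w k' → k % n = k' % n := by
    intro k k' h
    exact F.nodup.getElem_inj_iff.mp h
  have cpair : ∀ k, t (w k) = s (w (k+1)) ∧ ¬ Zi [w k, w (k+1)] := by
    intro k
    have hkn : k % n < n := Nat.mod_lt _ hn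
    by_cases hk1 : k % n + 1 < n
    · have e : w (k+1) = W[k % n + 1] := by
        simp only [hwdef]
        exact getElem_idx_congr (by rw [← Nat.mod_add_mod, Nat.mod_eq_of_lt hk1]) _
      have e0 : w k = W[k % n] := rfl
      rw [e0, e]
      exact ⟨chain'_getElem.mp F.chain (k % n) hk1, chain'_getElem.mp F.nz (k % n) hk1⟩
    · obtain ⟨x, hx, y, hy, hts0, hnz0⟩ := hJ
      obtain ⟨h1, hxe⟩ := eq_getElem_of_getLast? F.ne hx
      obtain ⟨h2, hye⟩ := eq_getElem_of_head? F.ne hy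
      have ex : w k = x := by
        rw [hxe]
        exact getElem_idx_congr (by omega) hkn
      have ey : w (k+1) = y := by
        rw [hye]
        simp only [hwdef]
        exact getElem_idx_congr (by rw [← Nat.mod_add_mod, show k % n + 1 = n by omega,
          Nat.mod_self]) _
      rw [ex, ey]
      exact ⟨hts0, hnz0⟩
  have cts : ∀ k, t (w k) = s (w (k+1)) := fun k => (cpair k).1
  have cnz : ∀ k, ¬ Zi [w k, w (k+1)] := fun k => (cpair k).2
  -- alignment of s1
  obtain ⟨i0, hi0, hx0⟩ := List.mem_iff_getElem.mp (F.Nmem _ (hs1N _ (List.getElem_mem hs10)))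
  have hs1al : ∀ j (hj : j < s1.length), s1[j] = w (i0 + j) :=
    fun j hj => (calign hsm F hJ hs1path.2 hs1nz hs10 hi0 hx0.symm j hj).2
  have key : ∀ q, MaxPathIn s t Zi N q → q.length = σ - 1 + n ∧
      ∀ j (hj : j < q.length), q[j] = w (i0 + 1 + j) := by
    intro q hq
    obtain ⟨⟨⟨hqne, hqc⟩, hqN⟩, hqnz, hqR, hqL⟩ := hq
    have hq0 : 0 < q.length := List.length_pos_iff.mpr hqne
    have hqnzc : q.Chain' (fun a b => ¬ Zi [a, b]) := by
      rw [chain'_getElem]; intro i hi hziq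
      exact hqnz (hZ _ _ hziq (pair_infix hi))
    obtain ⟨i, hiW, hqi⟩ := List.mem_iff_getElem.mp (F.Nmem _ (hqN _ (List.getElem_mem hq0)))
    have halq : ∀ j (hj : j < q.length), q[j] = w (i + j) :=
      fun j hj => (calign hsm F hJ hqc hqnzc hq0 hiW hqi.symm j hj).2
    -- right extension forces a suffix occurrence of s1
    have hlastq : q.getLast hqne = w (i + (q.length - 1)) := by
      rw [List.getLast_eq_getElem]; exact halq _ (by omega)
    have hcts : t (q.getLast hqne) = s (w (i + q.length)) := by
      rw [hlastq]
      have := cts (i + (q.length - 1))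
      rwa [show i + (q.length - 1) + 1 = i + q.length by omega] at this
    have hZr : Zi (q ++ [w (i + q.length)]) := by
      apply hqR _ (hwN _)
      exact ⟨q.getLast hqne, by rw [List.getLast?_eq_getLast hqne]; simp, hcts⟩
    have hqcpath : PathIn s t N (q ++ [w (i + q.length)]) := by
      refine ⟨⟨by simp, ?_⟩, ?_⟩
      · refine List.isChain_append.mpr ?_
        refine ⟨hqc, List.isChain_singleton _, ?_⟩
        intro x hx y hy
        have hye : y = w (i + q.length) := by
          have := hy; simp only [List.head?_cons, Option.mem_some_iff] at this
          exact this.symm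
        obtain ⟨_, hxe⟩ := eq_getElem_of_getLast? hqne hx
        rw [hxe, hye, ← List.getLast_eq_getElem]
        exact hcts
      · intro x hx
        rcases List.mem_append.mp hx with h | h
        · exact hqN x h
        · simp at h; subst h; exact hwN _
    obtain ⟨r, hrR, hrq⟩ := (hRmin _ hqcpath).mp hZr
    have hrsuf : r <:+ q ++ [w (i + q.length)] := by
      rcases infix_concat hrq with h | h
      · exact absurd (hZ _ _ (hZR r hrR) h) hqnz
      · exact h
    have hrs1 : r = s1 := by
      rcases hshape r hrR with rfl | ⟨x, y, rfl⟩
      · rfl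
      · exfalso
        obtain ⟨hyc, u, hu⟩ := suffix_pair_concat hrsuf
        have hul : u.length + 1 = q.length := by
          have := congrArg List.length hu; simp at this; omega
        have hxval : x = w (i + (q.length - 1)) := by
          have e1 : q[q.length - 1]'(by omega) = x := by
            rw [List.getElem_of_eq hu (by omega)]
            rw [getElem_idx_congr (show q.length - 1 = u.length by omega)
              (by simp; omega)]
            rw [List.getElem_append_right (le_refl _)]
            simp
          rw [← e1]; exact halq _ (by omega)
        apply cnz (i + (q.length - 1))
        rw [show i + (q.length - 1) + 1 = i + q.length by omega]
        rw [← hxval, ← hyc]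
        exact hZR _ hrR
    rw [hrs1] at hrsuf
    obtain ⟨u, hu⟩ := hrsuf
    have hul : u.length + s1.length = q.length + 1 := by
      have := congrArg List.length hu; simp at this; omega
    have hLσ : σ ≤ q.length := by omega
    have e1 : s1[0] = w i0 := by
      have := hs1al 0 hs10; rwa [Nat.add_zero] at this
    have hA : (i + (q.length - σ)) % n = i0 % n := by
      have g1 : (u ++ s1)[u.length]'(by simp; omega) = s1[0] := by
        rw [List.getElem_append_right (le_refl _)]
        simp
      have g2 : (u ++ s1)[u.length]'(by simp; omega)
          = (q ++ [w (i + q.length)])[u.length]'(by simp; omega) :=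
        List.getElem_of_eq hu _
      have g3 : (q ++ [w (i + q.length)])[u.length]'(by simp; omega)
          = q[q.length - σ]'(by omega) := by
        rw [List.getElem_append_left (show u.length < q.length by omega)]
        exact getElem_idx_congr (by omega) (by omega)
      have e2 : s1[0] = w (i + (q.length - σ)) := by
        rw [← g1, g2, g3]
        exact halq _ (by omega)
      exact hwinj _ _ (e2.symm.trans e1)
    -- left extension forces a prefix occurrence of s1
    have hhead : q.head hqne = w i := by
      rw [List.head_eq_getElem]
      have := halq 0 hq0; rwa [Nat.add_zero] at this
    have hdts : t (w (i + n - 1)) = s (q.head hqne) := by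
      have h1 := cts (i + n - 1)
      rw [show i + n - 1 + 1 = i + n by omega] at h1
      rw [hhead, h1]
      congr 1
      exact hw_congr (Nat.add_mod_right i n)
    have hZl : Zi (w (i + n - 1) :: q) := by
      apply hqL _ (hwN _)
      exact ⟨q.head hqne, by rw [List.head?_eq_head hqne]; simp, hdts⟩
    have hdpath : PathIn s t N (w (i + n - 1) :: q) := by
      refine ⟨⟨by simp, ?_⟩, ?_⟩
      · refine List.isChain_cons.mpr ?_
        refine ⟨?_, hqc⟩
        intro y hy
        obtain ⟨_, hye⟩ := eq_getElem_of_head? hqne hy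
        rw [hye, ← List.head_eq_getElem]
        exact hdts
      · intro x hx
        rcases List.mem_cons.mp hx with h | h
        · subst h; exact hwN _
        · exact hqN x h
    obtain ⟨r', hr'R, hr'q⟩ := (hRmin _ hdpath).mp hZl
    have hr'pre : r' <+: w (i + n - 1) :: q := by
      rcases List.infix_cons_iff.mp hr'q with h | h
      · exact h
      · exact absurd (hZ _ _ (hZR r' hr'R) h) hqnz
    have hB : i0 % n = (i + n - 1) % n := by
      rcases hshape r' hr'R with h' | ⟨x, y, hxy⟩
      · -- s1 prefix of d :: q
        rw [h'] at hr'pre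
        obtain ⟨v, hv⟩ := hr'pre
        have hd0 : s1[0] = w (i + n - 1) := by
          have g1 : (s1 ++ v)[0]'(by simp; omega) = s1[0] :=
            List.getElem_append_left hs10
          have g2 : (s1 ++ v)[0]'(by simp; omega) = (w (i + n - 1) :: q)[0]'(by simp) :=
            List.getElem_of_eq hv _
          rw [← g1, g2]
          simp
        exact hwinj _ _ (e1.symm.trans hd0)
      · exfalso
        rw [hxy] at hr'pre
        obtain ⟨hxd, h0q, hyq⟩ := prefix_pair_cons hr'pre
        apply cnz (i + n - 1)
        rw [show i + n - 1 + 1 = i + n by omega]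
        have hyw : y = w (i + n) := by
          rw [hyq]
          have := halq 0 hq0; rw [Nat.add_zero] at this
          rw [this]
          exact hw_congr (Nat.add_mod_right i n).symm
        rw [← hxd, ← hyw]
        exact hxy ▸ hZR _ hr'R
    have hi0n : i0 % n = i0 := Nat.mod_eq_of_lt hi0
    rw [hi0n] at hA hB
    -- no occurrence of s1 inside q bounds the length
    have hupper : q.length < n + σ := by
      by_contra hge
      push_neg at hge
      apply hqnz
      apply hZ s1 _ hs1zi
      have heqs : s1 = (q.drop (n-1)).take s1.length := by
        apply List.ext_getElem
        · rw [List.length_take, List.length_drop]; omega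
        · intro j hj1 hj2
          rw [List.getElem_take, List.getElem_drop]
          rw [hs1al j hj1, halq (n - 1 + j) (by omega)]
          apply hw_congr
          rw [show i + (n - 1 + j) = (i + n - 1) + j by omega]
          conv_rhs => rw [← Nat.mod_add_mod]
          rw [← hB]
      rw [heqs]
      exact ((List.take_prefix _ _).isInfix).trans (List.drop_suffix _ _).isInfix
    have harith : q.length - σ = n - 1 := by
      have hD : q.length - σ < n := by omega
      have hB' : i + n - 1 < n → i + n - 1 = i0 := by
        intro h; rw [hB, Nat.mod_eq_of_lt h]
      have hB'' : n ≤ i + n - 1 → i + n - 1 - n = i0 := by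
        intro h; rw [hB, Nat.mod_eq_sub_mod h, Nat.mod_eq_of_lt (by omega)]
      have hA' : i + (q.length - σ) < n → i + (q.length - σ) = i0 := by
        intro h; rw [← hA, Nat.mod_eq_of_lt h]
      have hA'' : n ≤ i + (q.length - σ) → i + (q.length - σ) - n = i0 := by
        intro h; rw [← hA, Nat.mod_eq_sub_mod h, Nat.mod_eq_of_lt (by omega)]
      rcases Nat.lt_or_ge (i + n - 1) n with h2 | h2 <;>
        rcases Nat.lt_or_ge (i + (q.length - σ)) n with h3 | h3
      · have := hB' h2; have := hA' h3; omega
      · have := hB' h2; have := hA'' h3; omega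
      · have := hB'' h2; have := hA' h3; omega
      · have := hB'' h2; have := hA'' h3; omega
    have hL : q.length = σ - 1 + n := by omega
    refine ⟨hL, ?_⟩
    intro j hj
    rw [halq j hj]
    apply hw_congr
    have e := Nat.mod_add_mod (i + n - 1) n (1 + j)
    rw [← hB] at e
    rw [show i0 + (1 + j) = i0 + 1 + j by omega,
        show i + n - 1 + (1 + j) = i + j + n by omega, Nat.add_mod_right] at e
    exact e.symm
  intro m m' hm hm' _
  obtain ⟨hL1, hE1⟩ := key m hm
  obtain ⟨hL2, hE2⟩ := key m' hm'
  apply List.ext_getElem (by rw [hL1, hL2])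
  intro j h1 h2
  rw [hE1 j h1, hE2 j h2]

end Abstract

section PhiLemmas
variable {s t : A → V} {ω : A → List A}
variable (hΦ : ∀ a : A, ω a ∈ Phi s t a ∧ ∀ q ∈ Phi s t a, q.length ≤ (ω a).length)

include hΦ

theorem omega_self_mem (a : A) : a ∈ ω a :=
  ((hΦ a).1.2.1).subset (by simp)

theorem omega_nodup (a : A) : (ω a).Nodup := by
  by_contra h
  obtain ⟨u, x, v, wl, he⟩ := not_nodup_decomp h
  obtain ⟨⟨hne, hch⟩, hmem, hcond⟩ := (hΦ a).1
  have hp' : (u ++ x :: (v ++ x :: (v ++ x :: wl))) ∈ Phi s t a := by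
    refine ⟨⟨by simp, ?_⟩, ?_, ?_⟩
    · rw [he] at hch
      rw [show u ++ x :: (v ++ x :: (v ++ x :: wl))
          = u ++ ((x :: v) ++ ((x :: v) ++ (x :: wl))) by simp]
      rw [show u ++ x :: v ++ x :: wl = u ++ ((x :: v) ++ (x :: wl)) by simp] at hch
      obtain ⟨hu, hrest, hJu⟩ := List.isChain_append.mp hch
      obtain ⟨hB, hC, hJB⟩ := List.isChain_append.mp hrest
      exact List.isChain_append.mpr ⟨hu,
        List.isChain_append.mpr ⟨hB, hrest, junc_head (by simp) hJB⟩,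
        junc_head (by simp) hJu⟩
    · apply mem_infix_singleton
      have ha : a ∈ ω a := hmem.subset (by simp)
      rw [he] at ha
      simp at ha ⊢
      tauto
    · intro y hy
      apply hcond
      rcases List.eq_nil_or_concat wl with rfl | ⟨w', e, rfl⟩
      · rw [show u ++ x :: (v ++ x :: (v ++ x :: [])) = (u ++ x :: (v ++ x :: v)) ++ [x]
          by simp] at hy
        rw [List.dropLast_concat] at hy
        rw [he, show u ++ x :: v ++ x :: [] = (u ++ x :: v) ++ [x] by simp,
          List.dropLast_concat]
        simp at hy ⊢
        tauto
      · simp only [List.concat_eq_append] at hy he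
        rw [show u ++ x :: (v ++ x :: (v ++ x :: (w' ++ [e])))
          = (u ++ x :: (v ++ x :: (v ++ x :: w'))) ++ [e] by simp] at hy
        rw [List.dropLast_concat] at hy
        rw [he, show u ++ x :: v ++ x :: (w' ++ [e]) = (u ++ x :: v ++ x :: w') ++ [e]
          by simp, List.dropLast_concat]
        simp at hy ⊢
        tauto
  have hle := (hΦ a).2 _ hp'
  rw [he] at hle
  simp at hle
  omega

theorem phi_extendR_absurd {a b : A} {u1 u2 v2 : List A} {c d : A}
    (h1 : ω a = u1 ++ [c]) (h2 : ω b = u2 ++ c :: d :: v2) : False := by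
  obtain ⟨⟨hne, hch⟩, hmem, hcond⟩ := (hΦ a).1
  obtain ⟨⟨hneb, hchb⟩, hmemb, hcondb⟩ := (hΦ b).1
  have htcd : t c = s d := chain'_mid (R := fun a b => t a = s b) hchb h2
  have hlast : (ω a).getLast hne = c := by
    have h := List.getLast?_concat (l := u1) (a := c)
    rw [← h1, List.getLast?_eq_getLast hne] at h
    simpa using h
  have hp' : (ω a ++ [d]) ∈ Phi s t a := by
    refine ⟨⟨by simp, ?_⟩, ?_, ?_⟩
    · refine List.isChain_append.mpr ?_
      refine ⟨hch, List.isChain_singleton _, ?_⟩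
      intro e he' y hy
      simp only [List.head?_cons, Option.mem_some_iff] at hy
      subst hy
      rw [List.getLast?_eq_getLast hne] at he'
      simp only [Option.mem_some_iff] at he'
      subst he'
      rw [hlast]
      exact htcd
    · exact hmem.trans ⟨[], [d], by simp⟩
    · rw [List.dropLast_concat]
      intro y hy
      by_cases hyl : y ∈ (ω a).dropLast
      · exact hcond y hyl
      · have hyc : y = c := by
          rw [← List.dropLast_append_getLast hne] at hy
          rcases List.mem_append.mp hy with h | h
          · exact absurd h hyl
          · simpa [hlast] using h
        rw [hyc]
        exact hcondb c (mem_dropLast_mid h2)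
  have hle := (hΦ a).2 _ hp'
  simp at hle

theorem phi_extendL_absurd {a b : A} {u2 v1 v2 : List A} {c e : A}
    (h1 : ω a = c :: v1) (h2 : ω b = u2 ++ e :: c :: v2) : False := by
  obtain ⟨⟨hne, hch⟩, hmem, hcond⟩ := (hΦ a).1
  obtain ⟨⟨hneb, hchb⟩, hmemb, hcondb⟩ := (hΦ b).1
  have htec : t e = s c := chain'_mid (R := fun a b => t a = s b) hchb h2
  have hp' : (e :: ω a) ∈ Phi s t a := by
    refine ⟨⟨by simp, ?_⟩, ?_, ?_⟩
    · refine List.isChain_cons.mpr ?_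
      refine ⟨?_, hch⟩
      intro y hy
      rw [h1] at hy
      simp only [List.head?_cons, Option.mem_some_iff] at hy
      subst hy
      exact htec
    · exact hmem.trans ⟨[e], [], by simp⟩
    · intro y hy
      have hd : (e :: ω a).dropLast = e :: (ω a).dropLast := by
        rw [h1, List.dropLast_cons₂]
      rw [hd] at hy
      rcases List.mem_cons.mp hy with rfl | h
      · exact hcondb y (mem_dropLast_mid h2)
      · exact hcond y h
  have hle := (hΦ a).2 _ hp'
  simp at hle

theorem phi_right_agree : ∀ (v1 : List A) {a b : A} {u1 u2 v2 : List A} {c : A},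
    ω a = u1 ++ c :: v1 → ω b = u2 ++ c :: v2 → v1 = v2 := by
  intro v1
  induction v1 with
  | nil =>
    intro a b u1 u2 v2 c h1 h2
    cases v2 with
    | nil => rfl
    | cons d v2' =>
      exact absurd (phi_extendR_absurd hΦ (by simpa using h1) h2) not_false
  | cons d1 v1' ih =>
    intro a b u1 u2 v2 c h1 h2
    cases v2 with
    | nil =>
      exact absurd (phi_extendR_absurd hΦ (by simpa using h2) h1) not_false
    | cons d2 v2' =>
      have hd : d1 = d2 := by
        obtain ⟨⟨hne, hch⟩, hmem, hcond⟩ := (hΦ a).1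
        obtain ⟨⟨hneb, hchb⟩, hmemb, hcondb⟩ := (hΦ b).1
        have hcd1 : t c = s d1 := chain'_mid (R := fun a b => t a = s b) hch h1
        have hcd2 : t c = s d2 := chain'_mid (R := fun a b => t a = s b) hchb h2
        obtain ⟨hout, _⟩ := hcond c (mem_dropLast_mid h1)
        obtain ⟨bb, hbb, hubb⟩ := hout
        rw [hubb d1 hcd1.symm, hubb d2 hcd2.symm]
      subst hd
      have e1 : ω a = (u1 ++ [c]) ++ d1 :: v1' := by rw [h1]; simp
      have e2 : ω b = (u2 ++ [c]) ++ d1 :: v2' := by rw [h2]; simp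
      rw [ih e1 e2]

theorem phi_left_agree : ∀ (k : ℕ) (u1 : List A), u1.length = k →
    ∀ {a b : A} {u2 v1 v2 : List A} {c : A},
    ω a = u1 ++ c :: v1 → ω b = u2 ++ c :: v2 → u1 = u2 := by
  intro k
  induction k with
  | zero =>
    intro u1 hu1 a b u2 v1 v2 c h1 h2
    have hnil : u1 = [] := List.eq_nil_of_length_eq_zero hu1
    subst hnil
    rcases List.eq_nil_or_concat u2 with rfl | ⟨u2', e, rfl⟩
    · rfl
    · have h2'' : ω b = u2' ++ e :: c :: v2 := by rw [h2]; simp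
      have h1'' : ω a = c :: v1 := by simpa using h1
      exact absurd (phi_extendL_absurd hΦ h1'' h2'') not_false
  | succ k ih =>
    intro u1 hu1 a b u2 v1 v2 c h1 h2
    rcases List.eq_nil_or_concat u1 with rfl | ⟨u1', e1, rfl⟩
    · simp at hu1
    rcases List.eq_nil_or_concat u2 with rfl | ⟨u2', e2, rfl⟩
    · have h2'' : ω b = c :: v2 := by simpa using h2
      have h1'' : ω a = u1' ++ e1 :: c :: v1 := by rw [h1]; simp
      exact absurd (phi_extendL_absurd hΦ h2'' h1'') not_false
    have h1' : ω a = u1' ++ e1 :: c :: v1 := by rw [h1]; simp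
    have h2' : ω b = u2' ++ e2 :: c :: v2 := by rw [h2]; simp
    have he : e1 = e2 := by
      obtain ⟨⟨hne, hch⟩, hmem, hcond⟩ := (hΦ a).1
      obtain ⟨⟨hneb, hchb⟩, hmemb, hcondb⟩ := (hΦ b).1
      have ht1 : t e1 = s c := chain'_mid (R := fun a b => t a = s b) hch h1'
      have ht2 : t e2 = s c := chain'_mid (R := fun a b => t a = s b) hchb h2'
      obtain ⟨_, hin⟩ := hcond e1 (mem_dropLast_mid h1')
      obtain ⟨bb, hbb, hubb⟩ := hin
      rw [hubb e1 rfl, hubb e2 (show t e2 = t e1 from ht2.trans ht1.symm)]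
    subst he
    have := ih u1' (by simp at hu1; omega) (c := e1) h1' h2'
    rw [this]

theorem omega_unique {a b : A} {x : A} (hxa : x ∈ ω a) (hxb : x ∈ ω b) : ω a = ω b := by
  obtain ⟨u1, v1, h1⟩ := List.append_of_mem hxa
  obtain ⟨u2, v2, h2⟩ := List.append_of_mem hxb
  have hv := phi_right_agree hΦ v1 h1 h2
  have hu := phi_left_agree hΦ u1.length u1 rfl h1 h2
  rw [h1, h2, hu, hv]

end PhiLemmas

section Build
variable {s t : A → V} {Zi : List A → Prop} {ω : A → List A} {N : Set A}
  {R : Set (List A)} {s1 : List A}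

theorem buildCore
    (hadm : Admissible s t Zi) (hR : MinGen s t Zi N R)
    (hS : SRel ω N R = {s1}) (hlen : 3 ≤ s1.length)
    {ws : List (List A)}
    (hwschain : ws.Chain' (JunctionOK s t Zi)) (hwspath : IsPath s t ws.flatten)
    (hln : ∀ l ∈ ws, l.Nodup)
    (hlpath : ∀ l ∈ ws, IsPath s t l)
    (huniq : ∀ l ∈ ws, ∀ (a' : A) (x : A), x ∈ ω a' → x ∈ l → ω a' = l)
    (hmemN : ∀ x ∈ ws.flatten, x ∈ N)
    (hNmem : ∀ a ∈ N, a ∈ ws.flatten)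
    (hnodup : ws.flatten.Nodup) : WFacts s t Zi N ws.flatten := by
  refine ⟨hwspath.1, hwspath.2, hnodup, hmemN, hNmem, ?_⟩
  have hnonil : [] ∉ ws := fun h => (hlpath [] h).1 rfl
  refine (List.isChain_flatten hnonil).mpr ?_
  constructor
  · intro l hl
    refine chain'_getElem.mpr ?_
    intro i hi hzi
    have hlne := (hlpath l hl).1
    have hpath : PathIn s t N [l[i], l[i+1]] := by
      refine ⟨⟨by simp, List.isChain_pair.mpr (chain'_getElem.mp (hlpath l hl).2 i hi)⟩, ?_⟩
      intro x hx
      simp at hx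
      rcases hx with rfl | rfl <;>
        exact hmemN _ (List.mem_flatten.mpr ⟨l, hl, List.getElem_mem _⟩)
    obtain ⟨r, hrR, hri⟩ := (hR.2.1 _ hpath).mp hzi
    have hr2 : 2 ≤ r.length := hadm.1 r (hR.1 r hrR).2
    have hreq : r = [l[i], l[i+1]] := hri.eq_of_length (by
      have := hri.length_le; simp at this ⊢; omega)
    by_cases hj : IsJuncRel ω N r
    · obtain ⟨a', ha', b', hb', x, hx, y, hy, hxy⟩ := hj
      have hxω : x ∈ ω a' := List.mem_of_mem_getLast? hx
      have hpq' := hxy.symm.trans hreq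
      simp only [List.cons.injEq] at hpq'
      have hxval : x = l[i] := hpq'.1
      have hxl : x ∈ l := hxval ▸ List.getElem_mem _
      have he := huniq l hl a' x hxω hxl
      rw [he] at hx
      obtain ⟨hlt, hxe⟩ := eq_getElem_of_getLast? hlne hx
      have : i = l.length - 1 := (hln l hl).getElem_inj_iff.mp (by rw [← hxval, hxe])
      omega
    · have hrS : r ∈ SRel ω N R := ⟨hrR, hj⟩
      rw [hS] at hrS
      have hr1 : r = s1 := hrS
      rw [hr1] at hreq
      have := congrArg List.length hreq
      simp at this
      omega
  · refine hwschain.imp ?_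
    intro p q hpq
    intro x hx y hy
    obtain ⟨x0, hx0, y0, hy0, _, hnz0⟩ := hpq
    rw [Option.mem_unique hx hx0, Option.mem_unique hy hy0]
    exact hnz0

theorem buildFacts {ws : List (List A)}
    (hω : OmegaSpec s t ω) (hadm : Admissible s t Zi)
    (hN : IsComp s t Zi ω N) (hws : CompEnum s t Zi ω N ws)
    (hR : MinGen s t Zi N R) (hS : SRel ω N R = {s1}) (hlen : 3 ≤ s1.length) :
    WFacts s t Zi N ws.flatten := by
  obtain ⟨hwsne, hwsnodup, hwsmem, hwschain, hwspath⟩ := hws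
  obtain ⟨a0, ha0⟩ := hN
  by_cases hcyc : IsCyclicQuiver s t
  · obtain ⟨p, hpPath, hpNodup, hpAll, hpWrap, hpω⟩ := hω.1 hcyc
    have hwsp : ∀ l ∈ ws, l = p := by
      intro l hl
      obtain ⟨a, _, he⟩ := (hwsmem l).mp hl
      rw [← he, hpω a]
    have hwseq : ws = [p] := by
      cases ws with
      | nil => exact absurd rfl hwsne
      | cons hd tl =>
        have hhd : hd = p := hwsp hd (by simp)
        cases tl with
        | nil => rw [hhd]
        | cons hd2 tl2 =>
          exfalso
          have h2 : hd2 = p := hwsp hd2 (by simp)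
          rw [List.nodup_cons] at hwsnodup
          exact hwsnodup.1 (by rw [hhd, h2]; simp)
    subst hwseq
    have hNall : ∀ c : A, c ∈ N := by
      intro c
      rw [ha0]
      exact Relation.ReflTransGen.single (Or.inl (by rw [hpω a0, hpω c]))
    refine buildCore hadm hR hS hlen hwschain hwspath ?_ ?_ ?_ ?_ ?_ ?_
    · intro l hl; simp at hl; subst hl; exact hpNodup
    · intro l hl; simp at hl; subst hl; exact hpPath
    · intro l hl a' x _ _; simp at hl; subst hl; exact hpω a'
    · intro x _; exact hNall x
    · intro a _; simpa using hpAll a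
    · simpa using hpNodup
  · have hΦ := hω.2 hcyc
    have hself : ∀ a : A, a ∈ ω a := omega_self_mem hΦ
    have hmemN : ∀ x ∈ ws.flatten, x ∈ N := by
      intro x hx
      obtain ⟨l, hl, hxl⟩ := List.mem_flatten.mp hx
      obtain ⟨b, hbN, hbe⟩ := (hwsmem l).mp hl
      rw [ha0] at hbN ⊢
      refine Relation.ReflTransGen.tail hbN ?_
      left
      have hxb : x ∈ ω b := by rw [hbe]; exact hxl
      exact (omega_unique hΦ (hself x) hxb).symm
    refine buildCore hadm hR hS hlen hwschain hwspath ?_ ?_ ?_ hmemN ?_ ?_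
    · intro l hl; obtain ⟨b, _, he⟩ := (hwsmem l).mp hl; rw [← he]; exact omega_nodup hΦ b
    · intro l hl; obtain ⟨b, _, he⟩ := (hwsmem l).mp hl; rw [← he]; exact (hΦ b).1.1
    · intro l hl a' x hx1 hx2
      obtain ⟨b, _, he⟩ := (hwsmem l).mp hl
      have hx2' : x ∈ ω b := by rw [he]; exact hx2
      rw [← he]
      exact omega_unique hΦ hx1 hx2'
    · intro a ha
      exact List.mem_flatten.mpr ⟨ω a, (hwsmem _).mpr ⟨a, ha, rfl⟩, hself a⟩
    · rw [List.nodup_flatten]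
      refine ⟨fun l hl => ?_, ?_⟩
      · obtain ⟨b, _, he⟩ := (hwsmem l).mp hl; rw [← he]; exact omega_nodup hΦ b
      · refine List.Pairwise.imp_of_mem ?_ hwsnodup
        intro l1 l2 h1 h2 hne12 x hx1 hx2
        obtain ⟨b1, _, he1⟩ := (hwsmem l1).mp h1
        obtain ⟨b2, _, he2⟩ := (hwsmem l2).mp h2
        have hx1' : x ∈ ω b1 := by rw [he1]; exact hx1
        have hx2' : x ∈ ω b2 := by rw [he2]; exact hx2
        exact hne12 (by rw [← he1, ← he2]; exact omega_unique hΦ hx1' hx2')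

end Build

/-- if `S_N = {s_1}` with `σ_1 > 1` (i.e. `s_1` of length greater than two),
then `A_N` is a UMP algebra iff the junction `ω_n^{l_n} ω_0^0` is not in `I_N`. -/
theorem stmt_15 [Fintype V] [Fintype A] (s t : A → V) (Zi : List A → Prop)
    (ω : A → List A) (hω : OmegaSpec s t ω)
    (hZ : ZeroClosed Zi) (hadm : Admissible s t Zi)
    (hsm : SpecialMultiserial s t Zi)
    (N : Set A) (hN : IsComp s t Zi ω N)
    (ws : List (List A)) (hws : CompEnum s t Zi ω N ws)
    (R : Set (List A)) (hR : MinGen s t Zi N R)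
    (s1 : List A) (hS : SRel ω N R = {s1}) (hlen : 3 ≤ s1.length) :
    UMPin s t Zi N ↔ JunctionOK s t Zi ws.flatten ws.flatten := by
  have F : WFacts s t Zi N ws.flatten := buildFacts hω hadm hN hws hR hS hlen
  have hs1S : s1 ∈ SRel ω N R := by rw [hS]; rfl
  have hs1R : s1 ∈ R := hs1S.1
  have hs1nj : ¬ IsJuncRel ω N s1 := hs1S.2
  have hs1zi : Zi s1 := (hR.1 s1 hs1R).2
  have hs1path : IsPath s t s1 := (hR.1 s1 hs1R).1.1
  have hs1N : ∀ x ∈ s1, x ∈ N := (hR.1 s1 hs1R).1.2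
  have hs1nz : s1.Chain' (fun a b => ¬ Zi [a, b]) := by
    rw [chain'_getElem]
    intro i hi hzi
    have hpath : PathIn s t N [s1[i], s1[i+1]] := by
      refine ⟨⟨by simp, List.isChain_pair.mpr (chain'_getElem.mp hs1path.2 i hi)⟩, ?_⟩
      intro x hx
      simp at hx
      rcases hx with rfl | rfl <;> exact hs1N _ (List.getElem_mem _)
    obtain ⟨r, hrR, hr⟩ := (hR.2.1 _ hpath).mp hzi
    have hrs : r = s1 := hR.2.2 r hrR s1 hs1R (hr.trans (pair_infix hi))
    have hle := hr.length_le
    rw [hrs] at hle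
    simp at hle
    omega
  have hshape : ∀ r ∈ R, r = s1 ∨ ∃ x y, r = [x, y] := by
    intro r hrR
    by_cases hj : IsJuncRel ω N r
    · obtain ⟨a', _, b', _, x, _, y, _, he⟩ := hj
      exact Or.inr ⟨x, y, he⟩
    · left
      have hrS : r ∈ SRel ω N R := ⟨hrR, hj⟩
      rw [hS] at hrS
      exact hrS
  have hZR : ∀ r ∈ R, Zi r := fun r h => (hR.1 r h).2
  constructor
  · intro hU
    by_contra hJn
    exact dir_forward hZ hsm F hR.2.1 hshape hZR hs1zi hs1path hs1N hs1nz hlen hJn hU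
  · intro hJ
    exact dir_backward hZ hsm F hR.2.1 hshape hZR hs1zi hs1path hs1N hs1nz hlen hJ

end UMPPaper
end

section
/- Let A = kQ/I be a special multiserial and locally monomial algebra, N a weakly connected component of G_{Q,I}, and m + I_N, m' + I_N two distinct non-disjoint maximal paths of A_N. Then either m = xρ and m' = ρy, or m = ρx and m' = yρ, for some non-trivial paths x, y, ρ in Q_N. -/
namespace UMPPaper

variable {V A : Type}

/-- Auxiliary: deterministic successors force one chain to be a prefix of the other. -/
lemma prefix_det_aux {Rel : A → A → Prop} (det : ∀ a b c, Rel a b → Rel a c → b = c) :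
    ∀ (v v' : List A) (a : A), List.Chain' Rel (a :: v) → List.Chain' Rel (a :: v') →
      v <+: v' ∨ v' <+: v := by
  intro v
  induction v with
  | nil => intro v' a _ _; exact Or.inl List.nil_prefix
  | cons b vs ih =>
    intro v' a h h'
    cases v' with
    | nil => exact Or.inr List.nil_prefix
    | cons b' vs' =>
      simp only [List.Chain', List.isChain_cons_cons] at h h'
      obtain rfl : b = b' := det a b b' h.1 h'.1
      rcases ih vs' b h.2 h'.2 with h1 | h1
      · exact Or.inl (List.cons_prefix_cons.2 ⟨rfl, h1⟩)
      · exact Or.inr (List.cons_prefix_cons.2 ⟨rfl, h1⟩)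

/-- Auxiliary: deterministic predecessors force one chain to be a suffix of the other. -/
lemma suffix_det_aux {Rel : A → A → Prop} (det : ∀ a b c, Rel b a → Rel c a → b = c) :
    ∀ (u u' : List A) (a : A), List.Chain' Rel (u ++ [a]) → List.Chain' Rel (u' ++ [a]) →
      u <:+ u' ∨ u' <:+ u := by
  intro u u' a h h'
  have h2 : List.Chain' (flip Rel) (a :: u.reverse) := by
    simp only [List.Chain'] at h ⊢; rw [show flip Rel = fun a b => Rel b a from rfl, ← List.isChain_reverse]; simpa using h
  have h2' : List.Chain' (flip Rel) (a :: u'.reverse) := by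
    simp only [List.Chain'] at h' ⊢; rw [show flip Rel = fun a b => Rel b a from rfl, ← List.isChain_reverse]; simpa using h'
  rcases prefix_det_aux (fun a b c hb hc => det a b c hb hc) u.reverse u'.reverse a h2 h2'
    with h1 | h1
  · exact Or.inl (List.reverse_prefix.1 h1)
  · exact Or.inr (List.reverse_prefix.1 h1)

/-- Auxiliary: a path outside the ideal has all its length-2 subpaths outside the ideal. -/
lemma good_chain_aux {s t : A → V} {Zi : List A → Prop} (hZ : ZeroClosed Zi) :
    ∀ m : List A, m.Chain' (fun a b => t a = s b) → ¬ Zi m →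
      m.Chain' (fun a b => t a = s b ∧ ¬ Zi [a, b]) := by
  intro m
  induction m with
  | nil => intro _ _; simp [List.Chain']
  | cons x xs ih =>
    intro hp hz
    cases xs with
    | nil => simp [List.Chain']
    | cons y ys =>
      simp only [List.Chain', List.isChain_cons_cons] at hp ⊢
      refine ⟨⟨hp.1, fun h => hz (hZ _ _ h ⟨[], ys, rfl⟩)⟩,
        ih hp.2 (fun h => hz (hZ _ _ h ⟨[x], [], by simp⟩))⟩

/-- Auxiliary: a maximal path which is an infix of another maximal path equals it. -/
lemma infix_eq_aux {s t : A → V} {Zi : List A → Prop} (hZ : ZeroClosed Zi) {N : Set A}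
    {m m' : List A} (hm : MaxPathIn s t Zi N m) (hm' : MaxPathIn s t Zi N m')
    (h : m <:+: m') : m = m' := by
  obtain ⟨l, r, rfl⟩ := h
  have hmne : m ≠ [] := hm.1.1.1
  cases r with
  | cons c r' =>
    exfalso
    obtain ⟨x, hx⟩ := Option.isSome_iff_exists.1 (List.getLast?_isSome.2 hmne)
    have h2 : List.Chain' (fun a b => t a = s b) (m ++ c :: r') :=
      (hm'.1.1.2).suffix ⟨l, by simp⟩
    simp only [List.Chain', List.isChain_append] at h2
    have hjx : t x = s c := h2.2.2 x hx c rfl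
    have hcN : c ∈ N := hm'.1.2 c (by simp)
    have hzz : Zi (m ++ [c]) := hm.2.2.1 c hcN ⟨x, hx, hjx⟩
    exact hm'.2.1 (hZ _ _ hzz ⟨l, r', by simp⟩)
  | nil =>
    rcases l.eq_nil_or_concat with rfl | ⟨l', c, rfl⟩
    · simp
    · exfalso
      obtain ⟨y, hy⟩ := Option.isSome_iff_exists.1 (List.isSome_head?.2 hmne)
      have h2 : List.Chain' (fun a b => t a = s b) ((l' ++ [c]) ++ m) := by
        have := hm'.1.1.2; simpa [List.concat_eq_append] using this
      simp only [List.Chain', List.isChain_append] at h2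
      have hjy : t c = s y := h2.2.2 c (by simp [List.getLast?_concat]) y hy
      have hcN : c ∈ N := hm'.1.2 c (by simp [List.concat_eq_append])
      have hzz : Zi (c :: m) := hm.2.2.2 c hcN ⟨y, hy, hjy⟩
      exact hm'.2.1 (hZ _ _ hzz ⟨l', [], by simp [List.concat_eq_append]⟩)

/-- two distinct non-disjoint maximal paths `m, m'` of `A_N` overlap as
`m = xρ, m' = ρy` or `m = ρx, m' = yρ` for some non-trivial paths `x, y, ρ`. -/
theorem stmt_16 [Fintype V] [Fintype A] (s t : A → V) (Zi : List A → Prop)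
    (ω : A → List A) (hω : OmegaSpec s t ω)
    (hZ : ZeroClosed Zi) (hadm : Admissible s t Zi)
    (hsm : SpecialMultiserial s t Zi)
    (N : Set A) (hN : IsComp s t Zi ω N)
    (R : Set (List A)) (hR : MinGen s t Zi N R)
    (m m' : List A) (hm : MaxPathIn s t Zi N m) (hm' : MaxPathIn s t Zi N m')
    (hne : m ≠ m') (hnd : ∃ a : A, a ∈ m ∧ a ∈ m') :
    ∃ x y ρ : List A, x ≠ [] ∧ y ≠ [] ∧ ρ ≠ [] ∧
      ((m = x ++ ρ ∧ m' = ρ ++ y) ∨ (m = ρ ++ x ∧ m' = y ++ ρ)) := by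
  obtain ⟨a, ham, ham'⟩ := hnd
  obtain ⟨u, v, rfl⟩ := List.append_of_mem ham
  obtain ⟨u', v', rfl⟩ := List.append_of_mem ham'
  have gm : (u ++ a :: v).Chain' (fun a b => t a = s b ∧ ¬ Zi [a, b]) :=
    good_chain_aux hZ _ hm.1.1.2 hm.2.1
  have gm' : (u' ++ a :: v').Chain' (fun a b => t a = s b ∧ ¬ Zi [a, b]) :=
    good_chain_aux hZ _ hm'.1.1.2 hm'.2.1
  have gfv : (a :: v).Chain' (fun a b => t a = s b ∧ ¬ Zi [a, b]) := gm.suffix ⟨u, rfl⟩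
  have gfv' : (a :: v').Chain' (fun a b => t a = s b ∧ ¬ Zi [a, b]) := gm'.suffix ⟨u', rfl⟩
  have gbu : (u ++ [a]).Chain' (fun a b => t a = s b ∧ ¬ Zi [a, b]) := gm.prefix ⟨v, by simp⟩
  have gbu' : (u' ++ [a]).Chain' (fun a b => t a = s b ∧ ¬ Zi [a, b]) := gm'.prefix ⟨v', by simp⟩
  have hv := prefix_det_aux (fun x b c hb hc => (hsm x b c).1 hb hc) v v' a gfv gfv'
  have hu := suffix_det_aux (fun x b c hb hc => (hsm x b c).2 hb hc) u u' a gbu gbu'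
  rcases hu with ⟨d, rfl⟩ | ⟨d, rfl⟩ <;> rcases hv with ⟨e, rfl⟩ | ⟨e, rfl⟩
  · -- u' = d ++ u, v' = v ++ e : m is an infix of m'
    exact absurd (infix_eq_aux hZ hm hm' ⟨d, e, by simp⟩) hne
  · -- u' = d ++ u, v = v' ++ e : m = ρ ++ e, m' = d ++ ρ with ρ = u ++ a :: v'
    rcases eq_or_ne d [] with rfl | hd
    · exact absurd (infix_eq_aux hZ hm' hm ⟨[], e, by simp⟩).symm hne
    rcases eq_or_ne e [] with rfl | he
    · exact absurd (infix_eq_aux hZ hm hm' ⟨d, [], by simp⟩) hne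
    exact ⟨e, d, u ++ a :: v', he, hd, by simp, Or.inr ⟨by simp, by simp⟩⟩
  · -- u = d ++ u', v' = v ++ e : m = d ++ ρ, m' = ρ ++ e with ρ = u' ++ a :: v
    rcases eq_or_ne d [] with rfl | hd
    · exact absurd (infix_eq_aux hZ hm hm' ⟨[], e, by simp⟩) hne
    rcases eq_or_ne e [] with rfl | he
    · exact absurd (infix_eq_aux hZ hm' hm ⟨d, [], by simp⟩).symm hne
    exact ⟨d, e, u' ++ a :: v, hd, he, by simp, Or.inl ⟨by simp, by simp⟩⟩
  · -- u = d ++ u', v = v' ++ e : m' is an infix of m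
    exact absurd (infix_eq_aux hZ hm' hm ⟨d, e, by simp⟩).symm hne


end UMPPaper
end
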